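/- arXiv:1502.08026 — 4 statements merged into one kernel-verified Lean document; each statement's English description precedes it below -/
import Mathlib

section
/- Let K be a differential field of characteristic 0 and let F be a differential field extension of K whose field of constants equals the field of constants C of K. Let C̄ be an algebraic closure of C contained in a differential field extension of F. Then the field extensions C̄|C and F|C are linearly disjoint over C; in particular, any C-basis {α_i}_{i∈I} of C̄ is also an F-basis of the compositum F·C̄. -/
/-!
Common setup: differential fields realized as subfields of an ambient field `M`
of characteristic zero equipped with a derivation `D`.
-/

namespace PVGalois

variable {M : Type*} [Field M]

/-- `D` is a derivation on the field `M`. -/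
structure IsDerivation (D : M → M) : Prop where
  map_add : ∀ a b : M, D (a + b) = D a + D b
  leibniz : ∀ a b : M, D (a * b) = a * D b + D a * b

/-- A subfield `F` of `M` is a differential subfield if it is closed under `D`. -/
def DiffClosed (D : M → M) (F : Subfield M) : Prop :=
  ∀ x ∈ F, D x ∈ F

/-- The set of constants of the differential subfield `F`. -/
def constantsOf (D : M → M) (F : Subfield M) : Set M :=
  {x | x ∈ F ∧ D x = 0}

/-- `L` is differentially generated over `K` by the set `S`:
`L` is the smallest differential subfield containing `K` and `S`. -/
def IsDiffGenBy (D : M → M) (K : Subfield M) (S : Set M) (L : Subfield M) : Prop :=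
  K ≤ L ∧ S ⊆ (L : Set M) ∧ DiffClosed D L ∧
    ∀ F : Subfield M, K ≤ F → S ⊆ (F : Set M) → DiffClosed D F → L ≤ F

/-- `y` is a solution of the homogeneous linear differential equation
`Y⁽ⁿ⁾ + a_{n-1} Y⁽ⁿ⁻¹⁾ + ⋯ + a_1 Y' + a_0 Y = 0`. -/
def IsSolution (D : M → M) (n : ℕ) (a : Fin n → M) (y : M) : Prop :=
  D^[n] y + ∑ i : Fin n, a i * D^[(i : ℕ)] y = 0

/-- A family `v` is linearly independent over the set of scalars `A ⊆ M`. -/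
def LinIndepOver {ι : Type*} (A : Set M) (v : ι → M) : Prop :=
  ∀ (s : Finset ι) (c : ι → M), (∀ i, c i ∈ A) →
    ∑ i ∈ s, c i * v i = 0 → ∀ i ∈ s, c i = 0

/-- Every element of `T` is a finite linear combination of the family `v`
with coefficients in `A`. -/
def SpansOver {ι : Type*} (A : Set M) (v : ι → M) (T : Set M) : Prop :=
  ∀ x ∈ T, ∃ (s : Finset ι) (c : ι → M), (∀ i, c i ∈ A) ∧ x = ∑ i ∈ s, c i * v i

/-- `Cb` is an algebraic closure of the set `C` inside `M`:
it contains `C`, is algebraic over `C`, and is algebraically closed. -/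
def IsAlgClosureOf (C : Set M) (Cb : Subfield M) : Prop :=
  C ⊆ (Cb : Set M) ∧
  (∀ x ∈ Cb, ∃ p : Polynomial M, p ≠ 0 ∧ (∀ k, p.coeff k ∈ C) ∧ p.eval x = 0) ∧
  (∀ p : Polynomial M, 0 < p.degree → (∀ k, p.coeff k ∈ Cb) → ∃ x ∈ Cb, p.eval x = 0)

/-- `L|K` is a Picard-Vessiot extension for the equation with coefficients `a`,
with fundamental system of solutions `η`. -/
def IsPicardVessiotWith (D : M → M) (K L : Subfield M) (n : ℕ) (a : Fin n → M)
    (η : Fin n → M) : Prop :=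
  (∀ i, a i ∈ K) ∧ (∀ j, IsSolution D n a (η j)) ∧
  LinIndepOver (constantsOf D L) η ∧
  IsDiffGenBy D K (Set.range η) L ∧
  constantsOf D L = constantsOf D K

/-- `L|K` is a Picard-Vessiot extension for the equation with coefficients `a`. -/
def IsPicardVessiot (D : M → M) (K L : Subfield M) (n : ℕ) (a : Fin n → M) : Prop :=
  ∃ η : Fin n → M, IsPicardVessiotWith D K L n a η

/-- A `K`-differential morphism from `L` into `Lb`: a ring homomorphism defined on `L`
with values in `Lb`, fixing `K` pointwise and commuting with the derivation `D`. -/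
def IsDiffHom (D : M → M) (K L Lb : Subfield M) (σ : ↥L →+* M) : Prop :=
  (∀ x, σ x ∈ Lb) ∧ (∀ x : ↥L, (x : M) ∈ K → σ x = (x : M)) ∧
  ∀ (x : M) (hx : x ∈ L) (hx' : D x ∈ L), σ ⟨D x, hx'⟩ = D (σ ⟨x, hx⟩)

/-- A `Kb`-differential automorphism of `Lb`: a `Kb`-differential morphism of `Lb`
into itself which is onto `Lb`. -/
def IsDiffAut (D : M → M) (Kb Lb : Subfield M) (τ : ↥Lb →+* M) : Prop :=
  IsDiffHom D Kb Lb Lb τ ∧ ∀ y ∈ Lb, ∃ x : ↥Lb, τ x = y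

end PVGalois

open PVGalois

open PVGalois Polynomial

namespace Stmt0Aux

variable {M : Type*} [Field M]

noncomputable def toDer (D : M → M) (hD : IsDerivation D) : Derivation ℤ M M where
  toLinearMap := (AddMonoidHom.mk' D hD.map_add).toIntLinearMap
  map_one_eq_zero' := by
    have h : D 1 = D 1 + D 1 := by
      have := hD.leibniz 1 1
      simpa using this
    have := left_eq_add.mp h
    simpa using this
  leibniz' a b := by
    have := hD.leibniz a b
    simp only [smul_eq_mul]
    show D (a * b) = a * D b + b * D a
    rw [this, mul_comm (D a) b]

lemma toDer_apply (D : M → M) (hD : IsDerivation D) (x : M) : toDer D hD x = D x := rfl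

lemma D_zero (D : M → M) (hD : IsDerivation D) : D 0 = 0 := by
  have := (toDer D hD).map_zero; simpa [toDer_apply] using this

lemma D_one (D : M → M) (hD : IsDerivation D) : D 1 = 0 := by
  exact (toDer D hD).map_one_eq_zero

lemma D_natCast (D : M → M) (hD : IsDerivation D) (n : ℕ) : D (n : M) = 0 := by
  exact (toDer D hD).map_natCast n

lemma D_eval (D : M → M) (hD : IsDerivation D) (p : M[X])
    (hp : ∀ k, D (p.coeff k) = 0) (x : M) :
    D (p.eval x) = p.derivative.eval x * D x := by
  have h := (toDer D hD).apply_eval_eq x p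
  have h0 : (toDer D hD).mapCoeffs p = 0 := by
    refine PolynomialModule.ext (Finsupp.ext fun i => ?_)
    simpa [Derivation.mapCoeffs_apply, toDer_apply] using hp i
  rw [h0, map_zero, zero_add, smul_eq_mul] at h
  exact h

lemma const_of_alg [CharZero M] (D : M → M) (hD : IsDerivation D) :
    ∀ (n : ℕ) (p : M[X]) (x : M), p.natDegree ≤ n → p ≠ 0 →
      (∀ k, D (p.coeff k) = 0) → p.eval x = 0 → D x = 0 := by
  intro n
  induction n with
  | zero =>
    intro p x hdeg hp0 _ hev
    have hC := Polynomial.eq_C_of_natDegree_eq_zero (Nat.le_zero.mp hdeg)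
    rw [hC, eval_C] at hev
    rw [hC, hev, map_zero] at hp0
    exact absurd rfl hp0
  | succ n ih =>
    intro p x hdeg hp0 hc hev
    by_cases hdeg0 : p.natDegree = 0
    · have hC := Polynomial.eq_C_of_natDegree_eq_zero hdeg0
      rw [hC, eval_C] at hev
      rw [hC, hev, map_zero] at hp0
      exact absurd rfl hp0
    by_cases hd : p.derivative.eval x = 0
    · have hd0 : p.derivative ≠ 0 := fun h =>
        hdeg0 (Polynomial.natDegree_eq_zero_of_derivative_eq_zero h)
      have hdc : ∀ k, D (p.derivative.coeff k) = 0 := by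
        intro k
        have hn : D ((k : M) + 1) = 0 := by
          have := D_natCast D hD (k+1); push_cast at this; exact this
        rw [Polynomial.coeff_derivative, hD.leibniz, hc, hn]
        ring
      refine ih p.derivative x ?_ hd0 hdc hd
      have := Polynomial.natDegree_derivative_lt hdeg0
      omega
    · have h := D_eval D hD p hc x
      rw [hev, D_zero D hD] at h
      exact ((mul_eq_zero.mp h.symm).resolve_left hd)



lemma lin_indep_lift (D : M → M) (hD : IsDerivation D) {ι : Type*} (K F : Subfield M)
    (hFdc : DiffClosed D F) (hconst : constantsOf D F = constantsOf D K)
    (v : ι → M) (hv : ∀ i, D (v i) = 0)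
    (hind : LinIndepOver (constantsOf D K) v) :
    LinIndepOver (F : Set M) v := by
  classical
  intro s
  induction s using Finset.strongInduction with
  | _ s ih =>
    intro c hc hsum
    by_contra hcon
    push_neg at hcon
    obtain ⟨j, hjs, hcj⟩ := hcon
    set d : ι → M := fun i => if i ∈ s then c i / c j else 0 with hddef
    have hdF : ∀ i, d i ∈ F := by
      intro i
      simp only [hddef]
      split
      · exact div_mem (hc i) (hc j)
      · exact zero_mem F
    have hdsum : ∑ i ∈ s, d i * v i = 0 := by
      have h1 : ∑ i ∈ s, d i * v i = (∑ i ∈ s, c i * v i) / c j := by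
        rw [Finset.sum_div]
        refine Finset.sum_congr rfl fun i hi => ?_
        simp only [hddef, if_pos hi]
        rw [div_mul_eq_mul_div]
      rw [h1, hsum, zero_div]
    have hDsum : ∑ i ∈ s, D (d i) * v i = 0 := by
      have h0 : D (∑ i ∈ s, d i * v i) = 0 := by rw [hdsum]; exact D_zero D hD
      have h1 : D (∑ i ∈ s, d i * v i) = ∑ i ∈ s, D (d i * v i) :=
        map_sum (AddMonoidHom.mk' D hD.map_add) _ _
      rw [h1] at h0
      rw [← h0]
      refine Finset.sum_congr rfl fun i hi => ?_
      rw [hD.leibniz, hv i, mul_zero, zero_add]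
    have hdj1 : d j = 1 := by simp only [hddef, if_pos hjs]; exact div_self hcj
    have hDdj : D (d j) = 0 := by rw [hdj1]; exact D_one D hD
    have herase : ∑ i ∈ s.erase j, D (d i) * v i = 0 := by
      rw [← Finset.add_sum_erase s _ hjs, hDdj, zero_mul, zero_add] at hDsum
      exact hDsum
    have hall : ∀ i ∈ s.erase j, D (d i) = 0 :=
      ih (s.erase j) (Finset.erase_ssubset hjs) (fun i => D (d i))
        (fun i => hFdc _ (hdF i)) herase
    have hdC : ∀ i, d i ∈ constantsOf D K := by
      intro i
      by_cases h : i ∈ s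
      · have h0 : D (d i) = 0 := by
          rcases eq_or_ne i j with rfl | hne
          · exact hDdj
          · exact hall i (Finset.mem_erase.mpr ⟨hne, h⟩)
        have hmem : d i ∈ constantsOf D F := ⟨hdF i, h0⟩
        rw [hconst] at hmem
        exact hmem
      · have : d i = 0 := by simp [hddef, h]
        rw [this]
        exact ⟨zero_mem K, D_zero D hD⟩
    have := hind s d hdC hdsum j hjs
    rw [hdj1] at this
    exact one_ne_zero this

lemma isAlgebraic_of_subfield_coeffs (F : Subfield M) {x : M} (p : M[X]) (hp : p ≠ 0)
    (hc : ∀ k, p.coeff k ∈ F) (hev : p.eval x = 0) : IsAlgebraic F x := by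
  classical
  set q : Polynomial F := ∑ k ∈ p.support, Polynomial.C (⟨p.coeff k, hc k⟩ : F) * X ^ k with hq
  have hmap : q.map (algebraMap F M) = p := by
    rw [hq, Polynomial.map_sum]
    simp only [Polynomial.map_mul, Polynomial.map_C, Polynomial.map_pow, Polynomial.map_X]
    conv_rhs => rw [Polynomial.as_sum_support p]
    refine Finset.sum_congr rfl fun k _ => ?_
    rw [Polynomial.C_mul_X_pow_eq_monomial]
    rfl
  refine ⟨q, fun h => hp ?_, ?_⟩
  · rw [h, Polynomial.map_zero] at hmap; exact hmap.symm
  · rw [Polynomial.aeval_def, Polynomial.eval₂_eq_eval_map, hmap, hev]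


end Stmt0Aux

open Stmt0Aux

/-- If `F|K` is a differential field extension with the same constants
`C` as `K`, and `Cb` is an algebraic closure of `C`, then `Cb|C` and `F|C` are linearly
disjoint over `C`: every family of elements of `Cb` which is linearly independent over `C`
remains linearly independent over `F`.  In particular a `C`-basis `α` of `Cb` is an
`F`-basis of the compositum `F ⊔ Cb`. -/
theorem statement_0 {M : Type*} [Field M] [CharZero M] (D : M → M) (hD : IsDerivation D)
    (K F : Subfield M) (hKdc : DiffClosed D K) (hFdc : DiffClosed D F) (hKF : K ≤ F)
    (hconst : constantsOf D F = constantsOf D K)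
    (Cb : Subfield M) (hCb : IsAlgClosureOf (constantsOf D K) Cb)
    {ι' : Type*} (β : ι' → M) (hβmem : ∀ i, β i ∈ Cb)
    (hβind : LinIndepOver (constantsOf D K) β)
    {ι : Type*} (α : ι → M) (hαmem : ∀ i, α i ∈ Cb)
    (hαind : LinIndepOver (constantsOf D K) α)
    (hαspan : SpansOver (constantsOf D K) α (Cb : Set M)) :
    LinIndepOver (F : Set M) β ∧
    LinIndepOver (F : Set M) α ∧
    SpansOver (F : Set M) α ((F ⊔ Cb : Subfield M) : Set M) := by
  classical
  have hCF : constantsOf D K ⊆ (F : Set M) := fun x hx => hKF hx.1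
  have hCbconst : ∀ x ∈ Cb, D x = 0 := by
    intro x hx
    obtain ⟨p, hp0, hpc, hpe⟩ := hCb.2.1 x hx
    exact const_of_alg D hD p.natDegree p x le_rfl hp0 (fun k => (hpc k).2) hpe
  refine ⟨lin_indep_lift D hD K F hFdc hconst β (fun i => hCbconst _ (hβmem i)) hβind,
          lin_indep_lift D hD K F hFdc hconst α (fun i => hCbconst _ (hαmem i)) hαind, ?_⟩
  set P : M → Prop :=
    fun x => ∃ (s : Finset ι) (c : ι → M), (∀ i, c i ∈ F) ∧ x = ∑ i ∈ s, c i * α i with hP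
  have Psmul : ∀ f : M, f ∈ F → ∀ x, P x → P (f * x) := by
    rintro f hf x ⟨s, c, hcF, rfl⟩
    refine ⟨s, fun i => f * c i, fun i => mul_mem hf (hcF i), ?_⟩
    rw [Finset.mul_sum]
    exact Finset.sum_congr rfl fun i _ => (mul_assoc f (c i) (α i)).symm
  have Pzero : P 0 := ⟨∅, fun _ => 0, fun _ => zero_mem F, by simp⟩
  have Padd : ∀ x y, P x → P y → P (x + y) := by
    rintro x y ⟨s, c, hcF, rfl⟩ ⟨t, d, hdF, rfl⟩
    refine ⟨s ∪ t, fun i => (if i ∈ s then c i else 0) + (if i ∈ t then d i else 0),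
      fun i => add_mem (by split; exacts [hcF i, zero_mem F])
        (by split; exacts [hdF i, zero_mem F]), ?_⟩
    have : ∑ i ∈ s ∪ t, ((if i ∈ s then c i else 0) + (if i ∈ t then d i else 0)) * α i
        = (∑ i ∈ s, c i * α i) + ∑ i ∈ t, d i * α i := by
      simp only [add_mul, ite_mul, zero_mul]
      rw [Finset.sum_add_distrib, Finset.sum_ite_mem, Finset.sum_ite_mem,
        Finset.union_inter_cancel_left, Finset.union_inter_cancel_right]
    rw [this]
  have Psum : ∀ (t : Finset ι) (f : ι → M), (∀ j ∈ t, P (f j)) → P (∑ j ∈ t, f j) :=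
    fun t f hf => Finset.sum_induction f P Padd Pzero hf
  have PCb : ∀ y ∈ Cb, P y := by
    intro y hy
    obtain ⟨s, c, hcC, heq⟩ := hαspan y hy
    exact ⟨s, c, fun i => hCF (hcC i), heq⟩
  have PF : ∀ f : M, f ∈ F → P f := by
    intro f hf
    have := Psmul f hf 1 (PCb 1 (one_mem Cb))
    rwa [mul_one] at this
  have Pmul : ∀ x y, P x → P y → P (x * y) := by
    rintro x y ⟨s, c, hcF, rfl⟩ hy
    rw [Finset.sum_mul]
    refine Psum s _ fun i _ => ?_
    rw [mul_assoc]
    refine Psmul _ (hcF i) _ ?_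
    obtain ⟨t, d, hdF, rfl⟩ := hy
    rw [Finset.mul_sum]
    refine Psum t _ fun j _ => ?_
    rw [mul_left_comm]
    exact Psmul _ (hdF j) _ (PCb _ (mul_mem (hαmem i) (hαmem j)))
  intro x hx
  have hCbalg : ∀ y ∈ (Cb : Set M), IsAlgebraic F y := by
    intro y hy
    obtain ⟨p, hp0, hpc, hpe⟩ := hCb.2.1 y hy
    exact isAlgebraic_of_subfield_coeffs F p hp0 (fun k => hCF (hpc k)) hpe
  have hsub : (F ⊔ Cb : Subfield M) ≤ (IntermediateField.adjoin F (Cb : Set M)).toSubfield := by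
    rw [sup_le_iff]
    constructor
    · intro y hy
      exact (IntermediateField.adjoin F (Cb : Set M)).algebraMap_mem ⟨y, hy⟩
    · intro y hy
      exact IntermediateField.subset_adjoin F (Cb : Set M) hy
  have hx2 : x ∈ Algebra.adjoin F (Cb : Set M) := by
    have hx1 : x ∈ (IntermediateField.adjoin F (Cb : Set M)).toSubalgebra := hsub hx
    rwa [IntermediateField.adjoin_toSubalgebra_of_isAlgebraic hCbalg] at hx1
  suffices hPx : P x by exact hPx
  exact Algebra.adjoin_induction (fun y hy => PCb y hy) (fun r => PF r r.2)
    (fun a b _ _ ha hb => Padd a b ha hb) (fun a b _ _ ha hb => Pmul a b ha hb) hx2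
end

section
/- Let K be a differential field of characteristic 0 with field of constants C, and let L be a differential field extension of K with field of constants equal to C. Let C̄ be an algebraic closure of C contained in a differential field extension of L, and let L̄ = L·C̄ denote the compositum. Then the field of constants of L̄ is exactly C̄. -/
open PVGalois

namespace Statement1Aux

open Polynomial

variable {M : Type*} [Field M] {D : M → M}

lemma D_zero (hD : IsDerivation D) : D 0 = 0 := by
  have h := hD.map_add 0 0
  rw [add_zero] at h
  exact (left_eq_add.mp h)

lemma D_one (hD : IsDerivation D) : D 1 = 0 := by
  have h := hD.leibniz 1 1
  rw [mul_one, one_mul, mul_one] at h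
  exact (left_eq_add.mp h)

lemma D_natCast (hD : IsDerivation D) : ∀ n : ℕ, D (n : M) = 0
  | 0 => by simpa using D_zero hD
  | (n+1) => by
      push_cast
      rw [hD.map_add, D_natCast hD n, D_one hD, add_zero]

lemma D_sum (hD : IsDerivation D) {ι : Type*} (s : Finset ι) (f : ι → M) :
    D (∑ i ∈ s, f i) = ∑ i ∈ s, D (f i) := by
  induction s using Finset.cons_induction with
  | empty => simpa using D_zero hD
  | cons a s ha ih => rw [Finset.sum_cons, hD.map_add, ih, Finset.sum_cons]

lemma D_pow (hD : IsDerivation D) (x : M) : ∀ n : ℕ, D (x ^ n) = n * x ^ (n - 1) * D x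
  | 0 => by simpa using D_one hD
  | (n+1) => by
      have h := hD.leibniz x (x ^ n)
      rw [← pow_succ'] at h
      rw [h, D_pow hD x n]
      cases n with
      | zero => simp
      | succ m =>
          push_cast [Nat.add_sub_cancel]
          ring

lemma D_eval (hD : IsDerivation D) (p : M[X]) (x : M) :
    D (p.eval x) = (p.sum fun k a => D a * x ^ k) + (derivative p).eval x * D x := by
  induction p using Polynomial.induction_on' with
  | add p q hp hq =>
      rw [eval_add, hD.map_add, hp, hq, derivative_add, eval_add,
        Polynomial.sum_add_index p q _ (fun i => by rw [D_zero hD, zero_mul])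
          (fun a b₁ b₂ => by rw [hD.map_add, add_mul])]
      ring
  | monomial n a =>
      rw [eval_monomial, hD.leibniz, Polynomial.sum_monomial_index _ _
        (by rw [D_zero hD, zero_mul]), derivative_monomial, eval_monomial, D_pow hD]
      ring

lemma constants_mul (hD : IsDerivation D) {K : Subfield M} {a b : M}
    (ha : a ∈ constantsOf D K) (hb : b ∈ constantsOf D K) : a * b ∈ constantsOf D K :=
  ⟨K.mul_mem ha.1 hb.1, by rw [hD.leibniz, ha.2, hb.2]; ring⟩

lemma constants_natCast (hD : IsDerivation D) (K : Subfield M) (n : ℕ) :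
    (n : M) ∈ constantsOf D K := ⟨natCast_mem K n, D_natCast hD n⟩

/-- If `x` annihilates a nonzero polynomial with constant coefficients, then `x` is
a constant (characteristic zero). -/
lemma D_eq_zero_of_alg [CharZero M] (hD : IsDerivation D) (K : Subfield M) (x : M) :
    ∀ (n : ℕ) (p : M[X]), p.natDegree ≤ n → p ≠ 0 →
      (∀ k, p.coeff k ∈ constantsOf D K) → p.eval x = 0 → D x = 0 := by
  intro n
  induction n with
  | zero =>
      intro p hdeg hp0 hc he
      rw [Polynomial.eq_C_of_natDegree_le_zero hdeg, eval_C] at he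
      exact absurd (by rw [Polynomial.eq_C_of_natDegree_le_zero hdeg, he, map_zero]) hp0
  | succ n ih =>
      intro p hdeg hp0 hc he
      have hde : (p.sum fun k a => D a * x ^ k) + (derivative p).eval x * D x = 0 := by
        rw [← D_eval hD, he, D_zero hD]
      have hs0 : (p.sum fun k a => D a * x ^ k) = 0 :=
        Finset.sum_eq_zero fun k _ => by
          show D (p.coeff k) * x ^ k = 0
          rw [(hc k).2, zero_mul]
      rw [hs0, zero_add, mul_eq_zero] at hde
      rcases hde with hde | hde
      · by_cases hd0 : p.natDegree = 0
        · rw [Polynomial.eq_C_of_natDegree_le_zero hd0.le, eval_C] at he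
          exact absurd (by rw [Polynomial.eq_C_of_natDegree_le_zero hd0.le, he, map_zero]) hp0
        · have hlt := Polynomial.natDegree_derivative_lt hd0
          have hdne : derivative p ≠ 0 := fun h =>
            hd0 (Polynomial.natDegree_eq_zero_of_derivative_eq_zero h)
          refine ih (derivative p) (by omega) hdne ?_ hde
          intro k
          rw [Polynomial.coeff_derivative]
          have hcast : ((k : M) + 1) = ((k + 1 : ℕ) : M) := by push_cast; ring
          rw [hcast]
          exact constants_mul hD (hc (k+1)) (constants_natCast hD K (k+1))
      · exact hde

/-- Every element of `Cb` is a constant. -/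
lemma D_mem_Cb_eq_zero [CharZero M] (hD : IsDerivation D) (K : Subfield M) (Cb : Subfield M)
    (hCb : ∀ x ∈ Cb, ∃ p : Polynomial M, p ≠ 0 ∧ (∀ k, p.coeff k ∈ constantsOf D K) ∧
      p.eval x = 0) {c : M} (hc : c ∈ Cb) : D c = 0 := by
  obtain ⟨p, hp0, hpc, hpe⟩ := hCb c hc
  exact D_eq_zero_of_alg hD K c p.natDegree p le_rfl hp0 hpc hpe

/-- An `L`-linear combination of elements of `Cb` which is a constant lies in `Cb`. -/
lemma rep_mem [CharZero M] (hD : IsDerivation D) (K L : Subfield M) (hLdc : DiffClosed D L)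
    (hconst : constantsOf D L = constantsOf D K) (Cb : Subfield M)
    (hC : constantsOf D K ⊆ (Cb : Set M))
    (hCbalg : ∀ x ∈ Cb, ∃ p : Polynomial M, p ≠ 0 ∧ (∀ k, p.coeff k ∈ constantsOf D K) ∧
      p.eval x = 0) :
    ∀ s : Finset M, ↑s ⊆ (Cb : Set M) → ∀ l : M → M, (∀ c ∈ s, l c ∈ L) →
      D (∑ c ∈ s, l c * c) = 0 → (∑ c ∈ s, l c * c) ∈ Cb := by
  classical
  intro s
  induction s using Finset.strongInduction with
  | _ s ih =>
    intro hs l hl hdx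
    have hDc : ∀ c ∈ s, D c = 0 := fun c hc =>
      D_mem_Cb_eq_zero hD K Cb hCbalg (hs hc)
    have hds : ∑ c ∈ s, D (l c) * c = 0 := by
      rw [D_sum hD] at hdx
      rw [← hdx]
      refine Finset.sum_congr rfl fun c hc => ?_
      rw [hD.leibniz, hDc c hc, mul_zero, zero_add]
    by_cases hall : ∀ c ∈ s, D (l c) = 0
    · exact Subfield.sum_mem _ fun c hc =>
        Cb.mul_mem (hC (hconst ▸ ⟨hl c hc, hall c hc⟩)) (hs hc)
    · push_neg at hall
      obtain ⟨j, hj, hDj⟩ := hall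
      have hsplit : D (l j) * j + ∑ c ∈ s.erase j, D (l c) * c = 0 :=
        (Finset.add_sum_erase s (fun c => D (l c) * c) hj).trans hds
      have hjj : ∑ c ∈ s.erase j, D (l c) * c = -(D (l j) * j) :=
        eq_neg_of_add_eq_zero_right hsplit
      have hx : ∑ c ∈ s, l c * c
          = ∑ c ∈ s.erase j, (l c - l j * (D (l j))⁻¹ * D (l c)) * c := by
        have h1 : ∑ c ∈ s.erase j, (l c - l j * (D (l j))⁻¹ * D (l c)) * c
            = (∑ c ∈ s.erase j, l c * c)
              - l j * (D (l j))⁻¹ * ∑ c ∈ s.erase j, D (l c) * c := by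
          rw [Finset.mul_sum, ← Finset.sum_sub_distrib]
          exact Finset.sum_congr rfl fun c _ => by ring
        rw [h1, hjj, ← Finset.add_sum_erase s _ hj]
        field_simp
        ring
      rw [hx]
      refine ih (s.erase j) (Finset.erase_ssubset hj) ?_ _ ?_ ?_
      · exact fun c hc => hs (Finset.mem_of_mem_erase hc)
      · intro c hc
        have hc' := Finset.mem_of_mem_erase hc
        exact L.sub_mem (hl c hc')
          (L.mul_mem (L.mul_mem (hl j hj) (L.inv_mem (hLdc _ (hl j hj)))) (hLdc _ (hl c hc')))
      · rw [← hx]; exact hdx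

lemma exists_poly_over (L : Subfield M) (p : M[X]) (h : ∀ k, p.coeff k ∈ L) :
    ∃ q : Polynomial ↥L, q.map (algebraMap ↥L M) = p := by
  classical
  refine ⟨∑ k ∈ p.support, Polynomial.monomial k (⟨p.coeff k, h k⟩ : ↥L), ?_⟩
  rw [Polynomial.map_sum]
  conv_rhs => rw [p.as_sum_support]
  exact Finset.sum_congr rfl fun k _ => by rw [Polynomial.map_monomial]; rfl

lemma alg_over (L : Subfield M) (c : M) (p : M[X]) (hp0 : p ≠ 0)
    (hc : ∀ k, p.coeff k ∈ L) (he : p.eval c = 0) : IsAlgebraic ↥L c := by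
  obtain ⟨q, hq⟩ := exists_poly_over L p hc
  refine ⟨q, ?_, ?_⟩
  · rintro rfl
    rw [Polynomial.map_zero] at hq
    exact hp0 hq.symm
  · rw [Polynomial.aeval_def, ← Polynomial.eval_map, hq, he]

/-- Every element of the compositum `L ⊔ Cb` is an `L`-linear combination of
elements of `Cb`, provided `Cb` is algebraic over `L`. -/
lemma mem_span_of_mem_sup (L Cb : Subfield M)
    (halg : ∀ c ∈ (Cb : Set M), IsAlgebraic ↥L c)
    (x : M) (hx : x ∈ L ⊔ Cb) : x ∈ Submodule.span ↥L ((Cb : Set M)) := by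
  have hLle : L ≤ (IntermediateField.adjoin ↥L ((Cb : Set M))).toSubfield := by
    intro a ha
    exact (IntermediateField.adjoin ↥L ((Cb : Set M))).algebraMap_mem ⟨a, ha⟩
  have hCble : Cb ≤ (IntermediateField.adjoin ↥L ((Cb : Set M))).toSubfield :=
    fun a ha => IntermediateField.subset_adjoin _ _ ha
  have hx1 : x ∈ IntermediateField.adjoin ↥L ((Cb : Set M)) := (sup_le hLle hCble) hx
  have hx2 : x ∈ Algebra.adjoin ↥L ((Cb : Set M)) := by
    rw [← IntermediateField.adjoin_toSubalgebra_of_isAlgebraic halg]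
    exact hx1
  have hx3 : x ∈ Submodule.span ↥L ↑(Submonoid.closure ((Cb : Set M))) := by
    rw [← Algebra.adjoin_eq_span]
    exact hx2
  refine Submodule.span_mono ?_ hx3
  intro a ha
  exact Submonoid.closure_le.mpr (fun y hy => (hy : y ∈ Cb.toSubring.toSubmonoid)) ha

end Statement1Aux

open Statement1Aux in

/-- If `L|K` is a differential field extension with the same constants
`C` as `K`, and `Cb` is an algebraic closure of `C` inside the ambient differential field,
then the field of constants of the compositum `L̄ = L ⊔ Cb` is exactly `Cb`. -/
theorem statement_1 {M : Type*} [Field M] [CharZero M] (D : M → M) (hD : IsDerivation D)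
    (K L : Subfield M) (hKdc : DiffClosed D K) (hLdc : DiffClosed D L) (hKL : K ≤ L)
    (hconst : constantsOf D L = constantsOf D K)
    (Cb : Subfield M) (hCb : IsAlgClosureOf (constantsOf D K) Cb) :
    constantsOf D (L ⊔ Cb) = (Cb : Set M) := by
  classical
  have hCbalg := hCb.2.1
  apply Set.Subset.antisymm
  · rintro x ⟨hxmem, hxD⟩
    have halg : ∀ c ∈ (Cb : Set M), IsAlgebraic ↥L c := by
      intro c hc
      obtain ⟨p, hp0, hpc, hpe⟩ := hCbalg c hc
      exact alg_over L c p hp0 (fun k => hKL (hpc k).1) hpe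
    have hx3 : x ∈ Submodule.span ↥L ((Cb : Set M)) :=
      mem_span_of_mem_sup L Cb halg x hxmem
    obtain ⟨f, hfs, hfx⟩ := Submodule.mem_span_set.mp hx3
    have hfx' : ∑ m ∈ f.support, ((f m : M) * m) = x := by rw [← hfx]; rfl
    rw [← hfx']
    exact rep_mem hD K L hLdc hconst Cb hCb.1 hCbalg f.support hfs
      (fun m => ((f m : ↥L) : M)) (fun c _ => (f c).2) (by rw [hfx']; exact hxD)
  · intro c hc
    exact ⟨SetLike.le_def.mp le_sup_right hc, D_mem_Cb_eq_zero hD K Cb hCbalg hc⟩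
end

section
/- Let K be a differential field of characteristic 0 with field of constants C, L|K a Picard-Vessiot extension, C̄ an algebraic closure of C, {α_i}_{i∈I} a C-basis of C̄, and L̄ = L·C̄, K̄ = K·C̄. For every K-differential morphism σ : L → L̄, the map σ̂ defined on L̄ by σ̂(Σ λ_i α_i) = Σ σ(λ_i) α_i (for λ_i ∈ L, almost all zero) is a well-defined K̄-differential automorphism of L̄, and the maps σ ↦ σ̂ and τ ↦ τ|_L are mutually inverse bijections between the set DHom_K(L, L̄) of K-differential morphisms L → L̄ and the group DAut_{K̄}(L̄) of K̄-differential automorphisms of L̄. -/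
open PVGalois

set_option synthInstance.maxHeartbeats 1000000
set_option maxHeartbeats 4000000

namespace PVAux
open PVGalois Finset Polynomial

variable {M : Type*} [Field M] {D : M → M}

lemma dzero (hD : IsDerivation D) : D 0 = 0 := by
  have := hD.map_add 0 0; simpa using this.symm

lemma done' (hD : IsDerivation D) : D 1 = 0 := by
  have := hD.leibniz 1 1; simp at this
  exact this

lemma dneg (hD : IsDerivation D) (a : M) : D (-a) = - D a := by
  have := hD.map_add a (-a)
  simp [dzero hD] at this
  linear_combination -this

lemma dsub (hD : IsDerivation D) (a b : M) : D (a - b) = D a - D b := by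
  have := hD.map_add a (-b); rw [dneg hD] at this
  simpa [sub_eq_add_neg] using this

lemma dsum (hD : IsDerivation D) {ι : Type*} (s : Finset ι) (f : ι → M) :
    D (∑ i ∈ s, f i) = ∑ i ∈ s, D (f i) := by
  classical
  induction s using Finset.induction with
  | empty => simpa using dzero hD
  | insert a s hx ih =>
                    rw [Finset.sum_insert hx, Finset.sum_insert hx, hD.map_add, ih]

lemma dnat (hD : IsDerivation D) (n : ℕ) : D (n : M) = 0 := by
  induction n with
  | zero => simpa using dzero hD
  | succ k ih => push_cast; rw [hD.map_add, ih, done' hD, add_zero]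

lemma dpow (hD : IsDerivation D) (x : M) (k : ℕ) :
    D (x ^ k) = (k : M) * x ^ (k - 1) * D x := by
  induction k with
  | zero => simpa using done' hD
  | succ j ih =>
      rw [pow_succ, hD.leibniz, ih]
      cases j with
      | zero => simp
      | succ i =>
          simp only [Nat.add_sub_cancel]
          push_cast
          ring

/-- Every element of the algebraic closure `Cb` of the constants is itself a constant. -/
lemma cb_constant [CharZero M] (hD : IsDerivation D) (K : Subfield M) (Cb : Subfield M)
    (hCb : IsAlgClosureOf (constantsOf D K) Cb) : ∀ x ∈ Cb, D x = 0 := by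
  intro x hx
  -- property: there is a nonzero constant-coefficient relation of "degree" d
  set P : ℕ → Prop := fun d => ∃ c : ℕ → M, (∀ k, c k ∈ constantsOf D K) ∧ c d ≠ 0 ∧
      ∑ k ∈ Finset.range (d + 1), c k * x ^ k = 0 with hP
  have hPex : ∃ d, P d := by
    obtain ⟨p, hp0, hpc, hpe⟩ := hCb.2.1 x hx
    refine ⟨p.natDegree, p.coeff, hpc, ?_, ?_⟩
    · exact Polynomial.leadingCoeff_ne_zero.mpr hp0
    · rw [← Polynomial.eval_eq_sum_range x]; exact hpe
  classical
  obtain ⟨c, hcC, hcd, hcsum⟩ := Nat.find_spec hPex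
  set d := Nat.find hPex with hd
  by_contra hDx
  -- d = 0 is impossible
  rcases Nat.eq_zero_or_pos d with h0 | hdpos
  · rw [h0] at hcsum; simp at hcsum; exact hcd (h0 ▸ hcsum)
  -- differentiate the relation
  have hder : ∑ k ∈ Finset.range (d + 1), c k * ((k : M) * x ^ (k - 1) * D x) = 0 := by
    have := congrArg D hcsum
    rw [dsum hD, dzero hD] at this
    rw [← this]
    apply Finset.sum_congr rfl
    intro k _
    rw [hD.leibniz, (hcC k).2, dpow hD]
    ring
  have hder2 : ∑ k ∈ Finset.range (d + 1), ((k : M) * c k) * x ^ (k - 1) = 0 := by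
    have : (∑ k ∈ Finset.range (d + 1), ((k : M) * c k) * x ^ (k - 1)) * D x = 0 := by
      rw [Finset.sum_mul, ← hder]
      apply Finset.sum_congr rfl
      intro k _; ring
    exact (mul_eq_zero.mp this).resolve_right hDx
  -- reindex : drop the k = 0 term
  have hre : ∑ j ∈ Finset.range d, (((j+1 : ℕ) : M) * c (j+1)) * x ^ j = 0 := by
    rw [Finset.sum_range_succ'] at hder2
    simpa using hder2
  -- this gives P (d-1), contradicting minimality
  have hPd1 : P (d - 1) := by
    refine ⟨fun j => ((j+1 : ℕ) : M) * c (j+1), ?_, ?_, ?_⟩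
    · intro k
      exact ⟨mul_mem (by exact_mod_cast natCast_mem K (k+1)) (hcC (k+1)).1,
        by rw [hD.leibniz, (hcC (k+1)).2, dnat hD]; ring⟩
    · simp only []
      have h1 : d - 1 + 1 = d := Nat.succ_pred_eq_of_pos hdpos
      rw [h1]
      exact mul_ne_zero (Nat.cast_ne_zero.mpr (by omega)) hcd
    · rw [Nat.sub_add_cancel hdpos]; exact hre
  have := Nat.find_min' hPex hPd1
  rw [← hd] at this
  omega

end PVAux

namespace PVAux2
open PVGalois PVAux Finset

variable {M : Type*} [Field M] {D : M → M}

/-- The basis `α` of `C̄` over `C` stays linearly independent over `L`. -/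
lemma linIndep_L (hD : IsDerivation D) (K L : Subfield M) (hLdc : DiffClosed D L)
    (hconst : constantsOf D L = constantsOf D K)
    {ι : Type*} (α : ι → M) (hα0 : ∀ i, D (α i) = 0)
    (hαind : LinIndepOver (constantsOf D K) α) :
    LinIndepOver (L : Set M) α := by
  classical
  intro s
  induction s using Finset.strongInduction with
  | _ s ih =>
    intro c hc hsum
    by_contra hne
    push_neg at hne
    obtain ⟨i₀, hi₀s, hi₀⟩ := hne
    set μ : ι → M := fun i => c i / c i₀ with hμ
    have hμL : ∀ i, μ i ∈ L := fun i => div_mem (hc i) (hc i₀)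
    have hμsum : ∑ i ∈ s, μ i * α i = 0 := by
      have h2 : ∑ i ∈ s, μ i * α i = (c i₀)⁻¹ * ∑ i ∈ s, c i * α i := by
        rw [Finset.mul_sum]; apply Finset.sum_congr rfl; intro i _; rw [hμ]
        simp only []; ring
      rw [h2, hsum, mul_zero]
    have hdsum : ∑ i ∈ s, D (μ i) * α i = 0 := by
      have h1 := congrArg D hμsum
      rw [dsum hD, dzero hD] at h1
      rw [← h1]
      apply Finset.sum_congr rfl
      intro i _
      rw [hD.leibniz, hα0 i]; ring
    have hμi₀ : μ i₀ = 1 := div_self hi₀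
    have hdμi₀ : D (μ i₀) = 0 := by rw [hμi₀]; exact done' hD
    have herase : ∑ i ∈ s.erase i₀, D (μ i) * α i = 0 := by
      rw [Finset.sum_erase s (by rw [hdμi₀, zero_mul] : D (μ i₀) * α i₀ = 0)]
      exact hdsum
    have hall : ∀ i ∈ s, D (μ i) = 0 := by
      intro i hi
      by_cases h : i = i₀
      · rw [h]; exact hdμi₀
      · exact ih (s.erase i₀) (Finset.erase_ssubset hi₀s) (fun j => D (μ j))
          (fun j => hLdc _ (hμL j)) herase i (Finset.mem_erase.mpr ⟨h, hi⟩)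
    set μ' : ι → M := fun i => if i ∈ s then μ i else 0 with hμ'
    have hμ'C : ∀ i, μ' i ∈ constantsOf D K := by
      intro i
      rw [hμ']; simp only []
      split_ifs with h
      · rw [← hconst]; exact ⟨hμL i, hall i h⟩
      · rw [← hconst]; exact ⟨Subfield.zero_mem L, dzero hD⟩
    have hμ'sum : ∑ i ∈ s, μ' i * α i = 0 := by
      rw [← hμsum]; apply Finset.sum_congr rfl; intro i hi; rw [hμ']; simp [hi]
    have := hαind s μ' hμ'C hμ'sum i₀ hi₀s
    rw [hμ'] at this; simp only [if_pos hi₀s] at this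
    rw [this] at hμi₀
    exact zero_ne_one hμi₀

end PVAux2

namespace PVAux3
open PVGalois PVAux Finset Polynomial

variable {M : Type*} [Field M]

section Span

variable (L : Subfield M) {ι : Type*} (α : ι → M)

/-- The set of `L`-linear combinations of the family `α`. -/
def repSet : Set M :=
  {x | ∃ (s : Finset ι) (c : ι → M), (∀ i, c i ∈ L) ∧ x = ∑ i ∈ s, c i * α i}

variable {L α} {Cb : Subfield M}

lemma sum_indicator [DecidableEq ι] {u v : Finset ι} (h : v ⊆ u) (e : ι → M) :
    ∑ i ∈ u, (if i ∈ v then e i else 0) = ∑ i ∈ v, e i := by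
  classical
  rw [Finset.sum_ite_mem, Finset.inter_eq_right.mpr h]

lemma repSet_zero : (0:M) ∈ repSet L α :=
  ⟨∅, fun _ => 0, fun _ => zero_mem L, by simp⟩

lemma repSet_add {x y : M} (hx : x ∈ repSet L α) (hy : y ∈ repSet L α) :
    x + y ∈ repSet L α := by
  classical
  obtain ⟨s, c, hc, rfl⟩ := hx
  obtain ⟨t, d, hd, rfl⟩ := hy
  refine ⟨s ∪ t, fun i => (if i ∈ s then c i else 0) + (if i ∈ t then d i else 0), ?_, ?_⟩
  · intro i
    exact add_mem (by split_ifs; exacts [hc i, zero_mem L])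
      (by split_ifs; exacts [hd i, zero_mem L])
  · have h1 : ∀ i, ((if i ∈ s then c i else 0) + (if i ∈ t then d i else 0)) * α i
        = (if i ∈ s then c i * α i else 0) + (if i ∈ t then d i * α i else 0) := by
      intro i; split_ifs <;> ring
    rw [Finset.sum_congr rfl fun i _ => h1 i, Finset.sum_add_distrib,
      sum_indicator Finset.subset_union_left, sum_indicator Finset.subset_union_right]

lemma repSet_smul {l x : M} (hl : l ∈ L) (hx : x ∈ repSet L α) : l * x ∈ repSet L α := by
  obtain ⟨s, c, hc, rfl⟩ := hx
  refine ⟨s, fun i => l * c i, fun i => mul_mem hl (hc i), ?_⟩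
  rw [Finset.mul_sum]
  exact Finset.sum_congr rfl fun i _ => by ring

lemma repSet_neg {x : M} (hx : x ∈ repSet L α) : -x ∈ repSet L α := by
  have := repSet_smul (neg_mem (one_mem L)) hx
  simpa using this

lemma repSet_sum {κ : Type*} (s : Finset κ) (f : κ → M) (h : ∀ j ∈ s, f j ∈ repSet L α) :
    (∑ j ∈ s, f j) ∈ repSet L α :=
  Finset.sum_induction f (fun z => z ∈ repSet L α) (fun _ _ ha hb => repSet_add ha hb)
    repSet_zero h

lemma repSet_cbmul (hCbsub : ∀ y ∈ Cb, y ∈ repSet L α) (hαmem : ∀ i, α i ∈ Cb)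
    {β y : M} (hβ : β ∈ Cb) (hy : y ∈ repSet L α) : β * y ∈ repSet L α := by
  obtain ⟨t, d, hd, rfl⟩ := hy
  rw [Finset.mul_sum]
  refine repSet_sum t _ fun j _ => ?_
  have h1 : β * (d j * α j) = d j * (β * α j) := by ring
  rw [h1]
  exact repSet_smul (hd j) (hCbsub _ (mul_mem hβ (hαmem j)))

lemma repSet_mul (hCbsub : ∀ y ∈ Cb, y ∈ repSet L α) (hαmem : ∀ i, α i ∈ Cb)
    {x y : M} (hx : x ∈ repSet L α) (hy : y ∈ repSet L α) : x * y ∈ repSet L α := by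
  obtain ⟨s, c, hc, rfl⟩ := hx
  rw [Finset.sum_mul]
  refine repSet_sum s _ fun i _ => ?_
  have h1 : c i * α i * y = c i * (α i * y) := by ring
  rw [h1]
  exact repSet_smul (hc i) (repSet_cbmul hCbsub hαmem (hαmem i) hy)

lemma repSet_pow (hCbsub : ∀ y ∈ Cb, y ∈ repSet L α) (hαmem : ∀ i, α i ∈ Cb)
    {x : M} (hx : x ∈ repSet L α) (k : ℕ) : x ^ k ∈ repSet L α := by
  induction k with
  | zero => simpa using hCbsub 1 (one_mem Cb)
  | succ j ih => rw [pow_succ]; exact repSet_mul hCbsub hαmem ih hx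

lemma repSet_L (hCbsub : ∀ y ∈ Cb, y ∈ repSet L α) {x : M} (hx : x ∈ L) :
    x ∈ repSet L α := by
  have := repSet_smul hx (hCbsub 1 (one_mem Cb))
  simpa using this

lemma repSet_aeval (hCbsub : ∀ y ∈ Cb, y ∈ repSet L α) (hαmem : ∀ i, α i ∈ Cb)
    {x : M} (hx : x ∈ repSet L α) (r : Polynomial ↥L) :
    (Polynomial.aeval x r : M) ∈ repSet L α := by
  have h1 : (Polynomial.aeval x r : M)
      = ∑ k ∈ Finset.range (r.natDegree + 1), (r.coeff k : M) * x ^ k := by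
    conv_lhs => rw [r.as_sum_range_C_mul_X_pow]
    rw [map_sum]
    refine Finset.sum_congr rfl fun k _ => ?_
    simp only [map_mul, map_pow, Polynomial.aeval_X, Polynomial.aeval_C]
    rfl
  rw [h1]
  exact repSet_sum _ _ fun k _ =>
    repSet_smul (r.coeff k).2 (repSet_pow hCbsub hαmem hx k)

lemma repSet_isIntegral (hαint : ∀ i, IsIntegral ↥L (α i)) {x : M} (hx : x ∈ repSet L α) :
    IsIntegral ↥L x := by
  obtain ⟨s, c, hc, rfl⟩ := hx
  refine IsIntegral.sum _ fun i _ => ?_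
  have h1 : IsIntegral ↥L (c i) := by
    have : c i = algebraMap ↥L M ⟨c i, hc i⟩ := rfl
    rw [this]; exact isIntegral_algebraMap
  exact h1.mul (hαint i)

lemma repSet_inv (hCbsub : ∀ y ∈ Cb, y ∈ repSet L α) (hαmem : ∀ i, α i ∈ Cb)
    (hαint : ∀ i, IsIntegral ↥L (α i)) {x : M} (hx : x ∈ repSet L α) :
    x⁻¹ ∈ repSet L α := by
  rcases eq_or_ne x 0 with rfl | hx0
  · simpa using repSet_zero
  have hint : IsIntegral ↥L x := repSet_isIntegral hαint hx
  set q := minpoly ↥L x with hq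
  have hc0 : q.coeff 0 ≠ 0 := minpoly.coeff_zero_ne_zero hint hx0
  have haev : (Polynomial.aeval x q : M) = 0 := minpoly.aeval ↥L x
  have hsplit : Polynomial.X * q.divX + Polynomial.C (q.coeff 0) = q :=
    Polynomial.X_mul_divX_add q
  have hkey : x * (Polynomial.aeval x q.divX : M) = -(q.coeff 0 : M) := by
    have := congrArg (fun r => (Polynomial.aeval x r : M)) hsplit
    simp only [map_add, map_mul, Polynomial.aeval_X, Polynomial.aeval_C] at this
    rw [haev] at this
    have h2 : (algebraMap ↥L M) (q.coeff 0) = (q.coeff 0 : M) := rfl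
    rw [h2] at this
    linear_combination this
  have hxinv : x⁻¹ = (-(q.coeff 0 : M))⁻¹ * (Polynomial.aeval x q.divX : M) := by
    have hne : (-(q.coeff 0 : M)) ≠ 0 := by
      have h3 : ((q.coeff 0 : M)) ≠ 0 := by
        simpa [ZeroMemClass.coe_eq_zero] using hc0
      simpa using h3
    have hA : (Polynomial.aeval x q.divX : M) ≠ 0 := fun h => hne (by rw [← hkey, h, mul_zero])
    rw [← hkey, mul_inv, mul_assoc, inv_mul_cancel₀ hA, mul_one]
  rw [hxinv]
  refine repSet_smul ?_ (repSet_aeval hCbsub hαmem hx q.divX)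
  exact inv_mem (neg_mem (q.coeff 0).2)

end Span

end PVAux3

namespace PVAux4
open PVGalois PVAux PVAux3 Finset Polynomial

variable {M : Type*} [Field M]

/-- An element with a nonzero vanishing polynomial with coefficients in `L` is
integral over `L`. -/
lemma isIntegral_of_poly (L : Subfield M) (y : M)
    (h : ∃ p : Polynomial M, p ≠ 0 ∧ (∀ k, p.coeff k ∈ L) ∧ p.eval y = 0) :
    IsIntegral ↥L y := by
  obtain ⟨p, hp0, hpc, hpe⟩ := h
  set c : ℕ → ↥L := fun k => ⟨p.coeff k, hpc k⟩ with hc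
  set q : Polynomial ↥L :=
    ∑ k ∈ Finset.range (p.natDegree + 1), Polynomial.C (c k) * Polynomial.X ^ k with hqdef
  have hmap : q.map (algebraMap ↥L M) = p := by
    rw [hqdef, Polynomial.map_sum]
    conv_rhs => rw [p.as_sum_range_C_mul_X_pow]
    refine Finset.sum_congr rfl fun k _ => ?_
    rw [Polynomial.map_mul, Polynomial.map_C, Polynomial.map_pow, Polynomial.map_X]
    rfl
  have hq0 : q ≠ 0 := by
    intro h
    apply hp0
    rw [← hmap, h, Polynomial.map_zero]
  have haev : Polynomial.aeval y q = 0 := by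
    rw [Polynomial.aeval_def, Polynomial.eval₂_eq_eval_map, hmap, hpe]
  exact (IsAlgebraic.isIntegral ⟨q, hq0, haev⟩)

/-- Main spanning lemma: every element of `L ⊔ Cb` is an `L`-linear combination
of the family `α`. -/
lemma rep_exists (L Cb : Subfield M) {ι : Type*} (α : ι → M)
    (hαmem : ∀ i, α i ∈ Cb)
    (hCbsub : ∀ y ∈ Cb, y ∈ repSet L α)
    (hCbalg : ∀ y ∈ Cb, ∃ p : Polynomial M, p ≠ 0 ∧ (∀ k, p.coeff k ∈ L) ∧ p.eval y = 0) :
    ∀ x ∈ L ⊔ Cb, x ∈ repSet L α := by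
  have hαint : ∀ i, IsIntegral ↥L (α i) := fun i =>
    isIntegral_of_poly L (α i) (hCbalg (α i) (hαmem i))
  let S : Subfield M :=
    { carrier := repSet L α
      mul_mem' := repSet_mul hCbsub hαmem
      one_mem' := by simpa using hCbsub 1 (one_mem Cb)
      add_mem' := repSet_add
      zero_mem' := repSet_zero
      neg_mem' := repSet_neg
      inv_mem' := fun x hx => repSet_inv hCbsub hαmem hαint hx }
  have hLS : L ≤ S := fun x hx => repSet_L hCbsub hx
  have hCbS : Cb ≤ S := fun x hx => hCbsub x hx
  intro x hx
  exact (sup_le hLS hCbS : L ⊔ Cb ≤ S) hx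

/-- Conversely, every `L`-linear combination of the `α` lies in `L ⊔ Cb`. -/
lemma rep_mem_sup (L Cb : Subfield M) {ι : Type*} (α : ι → M)
    (hαmem : ∀ i, α i ∈ Cb) {x : M} (hx : x ∈ repSet L α) : x ∈ L ⊔ Cb := by
  obtain ⟨s, c, hc, rfl⟩ := hx
  exact Subfield.sum_mem _ fun i _ => mul_mem
    (SetLike.le_def.mp le_sup_left (hc i)) (SetLike.le_def.mp le_sup_right (hαmem i))

end PVAux4

namespace PVAux5
open PVGalois PVAux Finset

variable {M : Type*} [Field M] {D : M → M}

set_option synthInstance.maxHeartbeats 1000000 in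
set_option maxHeartbeats 2000000 in
/-- Any `n+1` solutions of the linear ODE lying in a differential subfield `N`
whose constants are contained in `Cb ≤ N` are linearly dependent over `Cb`. -/
lemma solutions_dep (hD : IsDerivation D) (N Cb : Subfield M)
    (hNdc : DiffClosed D N) (hCbN : ∀ x ∈ Cb, x ∈ N)
    (hCb1 : (1:M) ∈ Cb) (hCb0 : (0:M) ∈ Cb)
    (hconstN : ∀ x ∈ N, D x = 0 → x ∈ Cb)
    (n : ℕ) (a : Fin n → M)
    (y : Fin (n+1) → M) (hyN : ∀ j, y j ∈ N) (hysol : ∀ j, IsSolution D n a (y j)) :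
    ∃ d : Fin (n+1) → M, (∀ j, d j ∈ Cb) ∧ (∑ j, d j * y j = 0) ∧ ∃ j, d j ≠ 0 := by
  classical
  rcases Nat.eq_zero_or_pos n with hn0 | hn
  · -- n = 0 : every solution is 0
    subst hn0
    have hy0 : ∀ j, y j = 0 := by
      intro j
      have := hysol j
      unfold IsSolution at this
      simpa using this
    exact ⟨fun _ => 1, fun _ => hCb1, by simp [hy0], ⟨0, one_ne_zero⟩⟩
  -- iterates of solutions stay in N
  have hiter : ∀ (j : Fin (n+1)) (m : ℕ), D^[m] (y j) ∈ N := by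
    intro j m
    induction m with
    | zero => simpa using hyN j
    | succ k ih => rw [Function.iterate_succ_apply']; exact hNdc _ ih
  -- a nontrivial N-linear relation between the "Wronskian vectors"
  set w : Fin (n+1) → (Fin n → ↥N) :=
    fun j i => (⟨D^[(i:ℕ)] (y j), hiter j (i:ℕ)⟩ : ↥N) with hw
  have hdep : ∃ c : Fin (n+1) → ↥N, ∑ j, c j • w j = 0 ∧ ∃ j, c j ≠ 0 := by
    have hnli : ¬ LinearIndependent ↥N w := by
      intro h
      have := h.fintype_card_le_finrank
      simp [Module.finrank_fin_fun] at this
    exact Fintype.not_linearIndependent_iff.mp hnli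
  obtain ⟨c, hcrel, j₂, hj₂⟩ := hdep
  have hrel : ∀ i : Fin n, ∑ j, (c j : M) * D^[(i:ℕ)] (y j) = 0 := by
    intro i
    have h1 := congrFun hcrel i
    have h2 : ((∑ j, c j • w j) i : ↥N) = ∑ j, c j * w j i := by
      rw [Finset.sum_apply]
      exact Finset.sum_congr rfl fun j _ => rfl
    rw [h2] at h1
    have h3 := congrArg (Subfield.subtype N) h1
    rw [map_sum] at h3
    simpa using h3
  -- upgrade the relation to constant coefficients, by induction on the support
  have upgrade : ∀ s : Finset (Fin (n+1)), ∀ c : Fin (n+1) → M, (∀ j, c j ∈ N) →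
      (∀ i : Fin n, ∑ j ∈ s, c j * D^[(i:ℕ)] (y j) = 0) → (∃ j ∈ s, c j ≠ 0) →
      ∃ d : Fin (n+1) → M, (∀ j, d j ∈ Cb) ∧ (∑ j ∈ s, d j * y j = 0) ∧
        ∃ j ∈ s, d j ≠ 0 := by
    intro s
    induction s using Finset.strongInduction with
    | _ s ih =>
      intro c hcN hcrel hcex
      obtain ⟨j₀, hj₀s, hj₀⟩ := hcex
      set μ : Fin (n+1) → M := fun j => c j / c j₀ with hμ
      have hμN : ∀ j, μ j ∈ N := fun j => div_mem (hcN j) (hcN j₀)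
      have hμrel : ∀ i : Fin n, ∑ j ∈ s, μ j * D^[(i:ℕ)] (y j) = 0 := by
        intro i
        have h2 : ∑ j ∈ s, μ j * D^[(i:ℕ)] (y j)
            = (c j₀)⁻¹ * ∑ j ∈ s, c j * D^[(i:ℕ)] (y j) := by
          rw [Finset.mul_sum]
          refine Finset.sum_congr rfl fun j _ => ?_
          rw [hμ]; simp only []; ring
        rw [h2, hcrel i, mul_zero]
      have hμj₀ : μ j₀ = 1 := div_self hj₀
      -- the differentiated relation
      have hDrel : ∀ i : Fin n, ∑ j ∈ s, D (μ j) * D^[(i:ℕ)] (y j) = 0 := by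
        intro i
        have hnext : ∑ j ∈ s, μ j * D (D^[(i:ℕ)] (y j)) = 0 := by
          rcases lt_or_eq_of_le (Nat.succ_le_of_lt i.2) with hlt | heq
          · have h3 := hμrel ⟨(i:ℕ)+1, hlt⟩
            simp only [Function.iterate_succ_apply'] at h3
            simpa using h3
          · -- top order: use the differential equation
            have hsolj : ∀ j, D (D^[(i:ℕ)] (y j))
                = - ∑ k : Fin n, a k * D^[(k:ℕ)] (y j) := by
              intro j
              have h4 := hysol j
              unfold IsSolution at h4
              have h5 : D^[n] (y j) = - ∑ k : Fin n, a k * D^[(k:ℕ)] (y j) := by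
                linear_combination h4
              have h6 : D (D^[(i:ℕ)] (y j)) = D^[(i:ℕ)+1] (y j) :=
                (Function.iterate_succ_apply' D _ _).symm
              rw [h6, show (i:ℕ)+1 = n from heq, h5]
            rw [Finset.sum_congr rfl fun j _ => by rw [hsolj j]]
            have h6 : ∑ j ∈ s, μ j * -∑ k : Fin n, a k * D^[(k:ℕ)] (y j)
                = - ∑ k : Fin n, a k * ∑ j ∈ s, μ j * D^[(k:ℕ)] (y j) := by
              calc ∑ j ∈ s, μ j * -∑ k : Fin n, a k * D^[(k:ℕ)] (y j)
                  = ∑ j ∈ s, ∑ k : Fin n, -(μ j * (a k * D^[(k:ℕ)] (y j))) := by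
                    refine Finset.sum_congr rfl fun j _ => ?_
                    rw [mul_neg, Finset.mul_sum, ← Finset.sum_neg_distrib]
                _ = ∑ k : Fin n, ∑ j ∈ s, -(μ j * (a k * D^[(k:ℕ)] (y j))) :=
                    Finset.sum_comm
                _ = ∑ k : Fin n, -(a k * ∑ j ∈ s, μ j * D^[(k:ℕ)] (y j)) := by
                    refine Finset.sum_congr rfl fun k _ => ?_
                    rw [Finset.mul_sum, ← Finset.sum_neg_distrib]
                    exact Finset.sum_congr rfl fun j _ => by ring
                _ = - ∑ k : Fin n, a k * ∑ j ∈ s, μ j * D^[(k:ℕ)] (y j) :=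
                    Finset.sum_neg_distrib _
            rw [h6]
            rw [Finset.sum_congr rfl fun k _ => by rw [hμrel k, mul_zero]]
            simp
        have h7 := congrArg D (hμrel i)
        rw [dsum hD, dzero hD] at h7
        have h8 : ∑ j ∈ s, (μ j * D (D^[(i:ℕ)] (y j)) + D (μ j) * D^[(i:ℕ)] (y j)) = 0 := by
          rw [← h7]
          exact Finset.sum_congr rfl fun j _ => (hD.leibniz _ _).symm
        rw [Finset.sum_add_distrib, hnext, zero_add] at h8
        exact h8
      by_cases hall : ∀ j ∈ s, D (μ j) = 0
      · -- all coefficients are constants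
        refine ⟨fun j => if j ∈ s then μ j else 0, ?_, ?_, ?_⟩
        · intro j
          dsimp only
          split_ifs with h
          · exact hconstN _ (hμN j) (hall j h)
          · exact hCb0
        · dsimp only
          have := hμrel ⟨0, hn⟩
          simp only [Function.iterate_zero_apply] at this
          rw [← this]
          exact Finset.sum_congr rfl fun j hj => by rw [if_pos hj]
        · exact ⟨j₀, hj₀s, by dsimp only; rw [if_pos hj₀s, hμj₀]; exact one_ne_zero⟩
      · -- differentiate and use the induction hypothesis on a smaller support
        push_neg at hall
        obtain ⟨j₁, hj₁s, hj₁⟩ := hall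
        have hDμj₀ : D (μ j₀) = 0 := by rw [hμj₀]; exact done' hD
        have hj₁j₀ : j₁ ≠ j₀ := fun h => hj₁ (h ▸ hDμj₀)
        have herase : ∀ i : Fin n, ∑ j ∈ s.erase j₀, D (μ j) * D^[(i:ℕ)] (y j) = 0 := by
          intro i
          rw [Finset.sum_erase s (by rw [hDμj₀, zero_mul])]
          exact hDrel i
        obtain ⟨d, hdCb, hdsum, j₂', hj₂'e, hj₂'⟩ := ih (s.erase j₀)
          (Finset.erase_ssubset hj₀s) (fun j => D (μ j)) (fun j => hNdc _ (hμN j))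
          herase ⟨j₁, Finset.mem_erase.mpr ⟨hj₁j₀, hj₁s⟩, hj₁⟩
        refine ⟨fun j => if j = j₀ then 0 else d j, ?_, ?_, ?_⟩
        · intro j; dsimp only; split_ifs; exacts [hCb0, hdCb j]
        · dsimp only
          rw [← Finset.add_sum_erase s _ hj₀s]
          rw [if_pos rfl, zero_mul, zero_add]
          rw [← hdsum]
          exact Finset.sum_congr rfl fun j hj => by
            rw [if_neg (Finset.mem_erase.mp hj).1]
        · exact ⟨j₂', Finset.mem_of_mem_erase hj₂'e,
            by dsimp only; rw [if_neg (Finset.mem_erase.mp hj₂'e).1]; exact hj₂'⟩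
  obtain ⟨d, hdCb, hdsum, j₃, _, hj₃⟩ := upgrade Finset.univ (fun j => (c j : M))
    (fun j => (c j).2) (fun i => hrel i)
    ⟨j₂, Finset.mem_univ j₂, by simpa [ZeroMemClass.coe_eq_zero] using hj₂⟩
  exact ⟨d, hdCb, hdsum, j₃, hj₃⟩

end PVAux5

namespace PVAux6
open PVGalois PVAux PVAux3 Finset

variable {M : Type*} [Field M]

/-- Transport of a representation along a map `g` vanishing at `0`:
well-definedness of `σ̂`. -/
lemma rep_map_eq {L : Subfield M} {ι : Type*} {α : ι → M}
    (hLind : LinIndepOver (L : Set M) α) (g : M → M) (hg0 : g 0 = 0)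
    {s t : Finset ι} {c d : ι → M} (hc : ∀ i, c i ∈ L) (hd : ∀ i, d i ∈ L)
    (h : ∑ i ∈ s, c i * α i = ∑ i ∈ t, d i * α i) :
    ∑ i ∈ s, g (c i) * α i = ∑ i ∈ t, g (d i) * α i := by
  classical
  have hcoeff : ∀ i, (if i ∈ s then c i else 0) = (if i ∈ t then d i else 0) := by
    have hν : ∀ i, (if i ∈ s then c i else 0) - (if i ∈ t then d i else 0) ∈ L := by
      intro i
      exact sub_mem (by split_ifs; exacts [hc i, zero_mem L])
        (by split_ifs; exacts [hd i, zero_mem L])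
    have hsum : ∑ i ∈ s ∪ t,
        ((if i ∈ s then c i else 0) - (if i ∈ t then d i else 0)) * α i = 0 := by
      have h1 : ∀ i, ((if i ∈ s then c i else 0) - (if i ∈ t then d i else 0)) * α i
          = (if i ∈ s then c i * α i else 0) - (if i ∈ t then d i * α i else 0) := by
        intro i; split_ifs <;> ring
      rw [Finset.sum_congr rfl fun i _ => h1 i, Finset.sum_sub_distrib,
        sum_indicator Finset.subset_union_left, sum_indicator Finset.subset_union_right,
        h, sub_self]
    have hall := hLind (s ∪ t) _ hν hsum
    intro i
    by_cases h1 : i ∈ s ∪ t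
    · exact sub_eq_zero.mp (hall i h1)
    · rw [if_neg (fun h2 => h1 (Finset.mem_union_left _ h2)),
        if_neg (fun h2 => h1 (Finset.mem_union_right _ h2))]
  have h1 : ∑ i ∈ s, g (c i) * α i
      = ∑ i ∈ s ∪ t, g (if i ∈ s then c i else 0) * α i := by
    rw [← sum_indicator Finset.subset_union_left (fun i => g (c i) * α i)]
    refine Finset.sum_congr rfl fun i _ => ?_
    split_ifs with h2
    · rfl
    · rw [hg0, zero_mul]
  have h2 : ∑ i ∈ t, g (d i) * α i
      = ∑ i ∈ s ∪ t, g (if i ∈ t then d i else 0) * α i := by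
    rw [← sum_indicator Finset.subset_union_right (fun i => g (d i) * α i)]
    refine Finset.sum_congr rfl fun i _ => ?_
    split_ifs with h2
    · rfl
    · rw [hg0, zero_mul]
  rw [h1, h2]
  exact Finset.sum_congr rfl fun i _ => by rw [hcoeff i]

/-- A map additive on a subfield takes sums of members to sums. -/
lemma map_sum_of_add {N : Subfield M} (f : M → M) (hf0 : f 0 = 0)
    (hfadd : ∀ x ∈ N, ∀ y ∈ N, f (x + y) = f x + f y) {κ : Type*} (t : Finset κ)
    (v : κ → M) (hv : ∀ j ∈ t, v j ∈ N) : f (∑ j ∈ t, v j) = ∑ j ∈ t, f (v j) := by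
  classical
  induction t using Finset.induction with
  | empty => simpa using hf0
  | insert b t h ih =>
      rw [Finset.sum_insert h, Finset.sum_insert h,
        hfadd _ (hv b (Finset.mem_insert_self b t)) _
          (Subfield.sum_mem N fun j hj => hv j (Finset.mem_insert_of_mem hj)),
        ih fun j hj => hv j (Finset.mem_insert_of_mem hj)]

/-- Two ring homomorphisms on `L ⊔ Cb` agreeing on `L` and on `Cb` agree. -/
lemma ringhom_ext_of_sup (L Cb : Subfield M) (τ τ' : ↥(L ⊔ Cb) →+* M)
    (hL : ∀ (x : M) (hx : x ∈ L), τ ⟨x, SetLike.le_def.mp le_sup_left hx⟩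
      = τ' ⟨x, SetLike.le_def.mp le_sup_left hx⟩)
    (hCb : ∀ (x : M) (hx : x ∈ Cb), τ ⟨x, SetLike.le_def.mp le_sup_right hx⟩
      = τ' ⟨x, SetLike.le_def.mp le_sup_right hx⟩) : τ = τ' := by
  classical
  let E : Subfield M :=
    { carrier := {x | ∃ h : x ∈ L ⊔ Cb, τ ⟨x, h⟩ = τ' ⟨x, h⟩}
      mul_mem' := by
        rintro a b ⟨ha, hta⟩ ⟨hb, htb⟩
        refine ⟨mul_mem ha hb, ?_⟩
        have h1 : (⟨a * b, mul_mem ha hb⟩ : ↥(L ⊔ Cb)) = ⟨a, ha⟩ * ⟨b, hb⟩ := rfl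
        rw [h1, map_mul, map_mul, hta, htb]
      one_mem' := by
        refine ⟨one_mem _, ?_⟩
        have h1 : (⟨1, one_mem _⟩ : ↥(L ⊔ Cb)) = 1 := rfl
        rw [h1, map_one, map_one]
      add_mem' := by
        rintro a b ⟨ha, hta⟩ ⟨hb, htb⟩
        refine ⟨add_mem ha hb, ?_⟩
        have h1 : (⟨a + b, add_mem ha hb⟩ : ↥(L ⊔ Cb)) = ⟨a, ha⟩ + ⟨b, hb⟩ := rfl
        rw [h1, map_add, map_add, hta, htb]
      zero_mem' := by
        refine ⟨zero_mem _, ?_⟩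
        have h1 : (⟨0, zero_mem _⟩ : ↥(L ⊔ Cb)) = 0 := rfl
        rw [h1, map_zero, map_zero]
      neg_mem' := by
        rintro a ⟨ha, hta⟩
        refine ⟨neg_mem ha, ?_⟩
        have h1 : (⟨-a, neg_mem ha⟩ : ↥(L ⊔ Cb)) = -⟨a, ha⟩ := rfl
        rw [h1, map_neg, map_neg, hta]
      inv_mem' := by
        rintro a ⟨ha, hta⟩
        refine ⟨inv_mem ha, ?_⟩
        have h1 : (⟨a⁻¹, inv_mem ha⟩ : ↥(L ⊔ Cb)) = (⟨a, ha⟩ : ↥(L ⊔ Cb))⁻¹ := rfl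
        rw [h1, map_inv₀, map_inv₀, hta] }
  have hsub : L ⊔ Cb ≤ E :=
    sup_le (fun x hx => ⟨SetLike.le_def.mp le_sup_left hx, hL x hx⟩)
      (fun x hx => ⟨SetLike.le_def.mp le_sup_right hx, hCb x hx⟩)
  ext x
  obtain ⟨h, heq⟩ := hsub x.2
  have h1 : x = ⟨(x : M), h⟩ := Subtype.ext rfl
  rw [h1]
  exact heq

end PVAux6

open PVAux PVAux2 PVAux3 PVAux4 PVAux5 PVAux6 in
/-- Let `L|K` be a Picard-Vessiot extension, `Cb` an algebraic closure of
the constants `C` of `K` with `C`-basis `α`, and `L̄ = L ⊔ Cb`, `K̄ = K ⊔ Cb`.  Then: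
(a) the restriction to `L` of any `K̄`-differential automorphism of `L̄` is a
`K`-differential morphism `L → L̄`;
(b) every `K`-differential morphism `σ : L → L̄` extends to a `K̄`-differential
automorphism `σ̂` of `L̄` given by the formula `σ̂ (∑ λᵢ αᵢ) = ∑ σ(λᵢ) αᵢ`;
(c) such an extension is unique.
Hence `σ ↦ σ̂` and `τ ↦ τ|_L` are mutually inverse bijections between
`DHom_K(L, L̄)` and `DAut_{K̄}(L̄)`. -/
theorem statement_2 {M : Type*} [Field M] [CharZero M] (D : M → M) (hD : IsDerivation D)
    (K L : Subfield M) (hKdc : DiffClosed D K) (hLdc : DiffClosed D L) (hKL : K ≤ L)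
    (n : ℕ) (a : Fin n → M) (hPV : IsPicardVessiot D K L n a)
    (Cb : Subfield M) (hCb : IsAlgClosureOf (constantsOf D K) Cb)
    {ι : Type*} (α : ι → M) (hαmem : ∀ i, α i ∈ Cb)
    (hαind : LinIndepOver (constantsOf D K) α)
    (hαspan : SpansOver (constantsOf D K) α (Cb : Set M)) :
    (∀ τ : ↥(L ⊔ Cb) →+* M, IsDiffAut D (K ⊔ Cb) (L ⊔ Cb) τ →
        IsDiffHom D K L (L ⊔ Cb) (τ.comp (Subfield.inclusion le_sup_left))) ∧
    (∀ σ : ↥L →+* M, IsDiffHom D K L (L ⊔ Cb) σ →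
        ∃ τ : ↥(L ⊔ Cb) →+* M, IsDiffAut D (K ⊔ Cb) (L ⊔ Cb) τ ∧
          (∀ x : ↥L, τ (Subfield.inclusion le_sup_left x) = σ x) ∧
          (∀ (s : Finset ι) (lam : ι → M) (hlam : ∀ i, lam i ∈ L),
            τ ⟨∑ i ∈ s, lam i * α i,
                Subfield.sum_mem _ fun i _ => mul_mem
                  (SetLike.le_def.mp le_sup_left (hlam i))
                  (SetLike.le_def.mp le_sup_right (hαmem i))⟩
              = ∑ i ∈ s, σ ⟨lam i, hlam i⟩ * α i)) ∧
    (∀ τ τ' : ↥(L ⊔ Cb) →+* M, IsDiffAut D (K ⊔ Cb) (L ⊔ Cb) τ →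
        IsDiffAut D (K ⊔ Cb) (L ⊔ Cb) τ' →
        (∀ x : ↥L, τ (Subfield.inclusion le_sup_left x)
            = τ' (Subfield.inclusion le_sup_left x)) → τ = τ') := by
  classical
  obtain ⟨η, haK, hηsol, hηindL, hηgen, hconst⟩ := hPV
  have hCbconst : ∀ x ∈ Cb, D x = 0 := cb_constant hD K Cb hCb
  have hα0 : ∀ i, D (α i) = 0 := fun i => hCbconst _ (hαmem i)
  have hCL : ∀ x ∈ constantsOf D K, x ∈ L := fun x hx => hKL hx.1
  have hCCb : ∀ x ∈ constantsOf D K, x ∈ Cb := fun x hx => hCb.1 hx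
  have hLind : LinIndepOver (L : Set M) α := linIndep_L hD K L hLdc hconst α hα0 hαind
  have hCbsub : ∀ y ∈ Cb, y ∈ repSet L α := by
    intro y hy; obtain ⟨s, c, hcC, hrep⟩ := hαspan y hy
    exact ⟨s, c, fun i => hCL _ (hcC i), hrep⟩
  have hCbalg : ∀ y ∈ Cb, ∃ p : Polynomial M, p ≠ 0 ∧ (∀ k, p.coeff k ∈ L) ∧ p.eval y = 0 := by
    intro y hy; obtain ⟨p, h1, h2, h3⟩ := hCb.2.1 y hy
    exact ⟨p, h1, fun k => hCL _ (h2 k), h3⟩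
  have hrepex : ∀ x ∈ L ⊔ Cb, ∃ (s : Finset ι) (c : ι → M), (∀ i, c i ∈ L) ∧
      x = ∑ i ∈ s, c i * α i :=
    fun x hx => rep_exists L Cb α hαmem hCbsub hCbalg x hx
  have hrepsup : ∀ (s : Finset ι) (c : ι → M), (∀ i, c i ∈ L) →
      (∑ i ∈ s, c i * α i) ∈ L ⊔ Cb :=
    fun s c hc => rep_mem_sup L Cb α hαmem ⟨s, c, hc, rfl⟩
  have hDrep : ∀ (s : Finset ι) (c : ι → M), (∀ i, c i ∈ L) →
      D (∑ i ∈ s, c i * α i) = ∑ i ∈ s, D (c i) * α i := by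
    intro s c hc
    rw [dsum hD]
    exact Finset.sum_congr rfl fun i _ => by rw [hD.leibniz, hα0 i, mul_zero, zero_add]
  have hsupdc : DiffClosed D (L ⊔ Cb) := by
    intro x hx
    obtain ⟨s, c, hc, rfl⟩ := hrepex x hx
    rw [hDrep s c hc]
    exact hrepsup s _ (fun i => hLdc _ (hc i))
  have hconstsup : ∀ x ∈ L ⊔ Cb, D x = 0 → x ∈ Cb := by
    intro x hx hdx
    obtain ⟨s, c, hc, rfl⟩ := hrepex x hx
    rw [hDrep s c hc] at hdx
    have hz := hLind s _ (fun i => hLdc _ (hc i)) hdx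
    refine Subfield.sum_mem _ fun i hi => mul_mem ?_ (hαmem i)
    have h4 : c i ∈ constantsOf D L := ⟨hc i, hz i hi⟩
    rw [hconst] at h4
    exact hCCb _ h4
  have hηL : ∀ j, η j ∈ L := fun j => hηgen.2.1 ⟨j, rfl⟩
  have hηindCb : ∀ c : Fin n → M, (∀ j, c j ∈ Cb) → ∑ j, c j * η j = 0 → ∀ j, c j = 0 := by
    intro c hcCb hcsum j
    choose t e heC hrepc using fun j' => hαspan (c j') (hcCb j')
    set T : Finset ι := Finset.univ.biUnion t with hT
    have htT : ∀ j', t j' ⊆ T := fun j' => Finset.subset_biUnion_of_mem t (Finset.mem_univ j')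
    set E : Fin n → ι → M := fun j' i => if i ∈ t j' then e j' i else 0 with hE
    have hcrep : ∀ j', c j' = ∑ i ∈ T, E j' i * α i := by
      intro j'
      rw [hrepc j', ← sum_indicator (htT j') (fun i => e j' i * α i)]
      refine Finset.sum_congr rfl fun i _ => ?_
      rw [hE]; dsimp only
      split_ifs with h
      · rfl
      · rw [zero_mul]
    have hswap : ∑ i ∈ T, (∑ j', E j' i * η j') * α i = 0 := by
      calc ∑ i ∈ T, (∑ j', E j' i * η j') * α i
          = ∑ i ∈ T, ∑ j', E j' i * α i * η j' := by
            refine Finset.sum_congr rfl fun i _ => ?_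
            rw [Finset.sum_mul]
            exact Finset.sum_congr rfl fun j' _ => by ring
        _ = ∑ j', ∑ i ∈ T, E j' i * α i * η j' := Finset.sum_comm
        _ = ∑ j', c j' * η j' := by
            refine Finset.sum_congr rfl fun j' _ => ?_
            rw [← Finset.sum_mul, ← hcrep j']
        _ = 0 := hcsum
    have hFL : ∀ i, (∑ j', E j' i * η j') ∈ L := by
      intro i
      refine Subfield.sum_mem _ fun j' _ => mul_mem ?_ (hηL j')
      rw [hE]; dsimp only
      split_ifs with h
      · exact hCL _ (heC j' i)
      · exact zero_mem L
    have hcoef0 := hLind T _ hFL hswap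
    have hE0 : ∀ i ∈ T, ∀ j', E j' i = 0 := by
      intro i hi j'
      have hEC : ∀ j'', E j'' i ∈ constantsOf D L := by
        intro j''
        rw [hconst, hE]; dsimp only
        split_ifs with h
        · exact heC j'' i
        · exact ⟨zero_mem K, dzero hD⟩
      exact hηindL Finset.univ (fun j'' => E j'' i) hEC (hcoef0 i hi) j' (Finset.mem_univ _)
    rw [hcrep j]
    exact Finset.sum_eq_zero fun i hi => by rw [hE0 i hi j, zero_mul]
  refine ⟨?_, ?_, ?_⟩
  · -- (a) restriction of an automorphism is a differential morphism
    intro τ hτ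
    obtain ⟨⟨hτmem, hτfix, hτdiff⟩, -⟩ := hτ
    refine ⟨fun x => hτmem _, ?_, ?_⟩
    · intro x hxK
      exact hτfix _ (SetLike.le_def.mp le_sup_left hxK)
    · intro x hx hx'
      exact hτdiff x (SetLike.le_def.mp le_sup_left hx) (SetLike.le_def.mp le_sup_left hx')
  · -- (b) extension of a differential morphism to an automorphism
    intro σ hσ
    obtain ⟨hσmem, hσfix, hσdiff⟩ := hσ
    set g : M → M := fun y => if h : y ∈ L then σ ⟨y, h⟩ else 0 with hgdef
    have hgL : ∀ (y : M) (h : y ∈ L), g y = σ ⟨y, h⟩ := fun y h => dif_pos h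
    have hg0 : g 0 = 0 := by rw [hgL 0 (zero_mem L)]; exact map_zero σ
    have hg1 : g 1 = 1 := by rw [hgL 1 (one_mem L)]; exact map_one σ
    have hgadd : ∀ x ∈ L, ∀ y ∈ L, g (x + y) = g x + g y := by
      intro x hx y hy
      rw [hgL _ (add_mem hx hy), hgL _ hx, hgL _ hy]
      exact map_add σ ⟨x, hx⟩ ⟨y, hy⟩
    have hgmul : ∀ x ∈ L, ∀ y ∈ L, g (x * y) = g x * g y := by
      intro x hx y hy
      rw [hgL _ (mul_mem hx hy), hgL _ hx, hgL _ hy]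
      exact map_mul σ ⟨x, hx⟩ ⟨y, hy⟩
    have hgfixK : ∀ x ∈ K, g x = x := fun x hx => by
      rw [hgL _ (hKL hx)]; exact hσfix ⟨x, hKL hx⟩ hx
    have hgmem : ∀ y ∈ L, g y ∈ L ⊔ Cb := fun y hy => by rw [hgL _ hy]; exact hσmem _
    have hgdiff : ∀ y ∈ L, g (D y) = D (g y) := fun y hy => by
      rw [hgL _ (hLdc y hy), hgL _ hy]; exact hσdiff y hy (hLdc y hy)
    -- the extension ̂σ as a bare function on M
    have hchoice : ∀ x : M, ∃ p : Finset ι × (ι → M),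
        x ∈ L ⊔ Cb → ((∀ i, p.2 i ∈ L) ∧ x = ∑ i ∈ p.1, p.2 i * α i) := by
      intro x
      by_cases h : x ∈ L ⊔ Cb
      · obtain ⟨s, c, hc, he⟩ := hrepex x h
        exact ⟨⟨s, c⟩, fun _ => ⟨hc, he⟩⟩
      · exact ⟨⟨∅, fun _ => 0⟩, fun h' => absurd h' h⟩
    choose rp hrpspec using hchoice
    set hat : M → M := fun x =>
      if h : x ∈ L ⊔ Cb then ∑ i ∈ (rp x).1, g ((rp x).2 i) * α i else 0 with hhatdef
    have hat_rep : ∀ (s : Finset ι) (c : ι → M), (∀ i, c i ∈ L) →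
        hat (∑ i ∈ s, c i * α i) = ∑ i ∈ s, g (c i) * α i := by
      intro s c hc
      have hm := hrepsup s c hc
      rw [hhatdef]; dsimp only; rw [dif_pos hm]
      obtain ⟨hc', he'⟩ := hrpspec _ hm
      exact rep_map_eq hLind g hg0 hc' hc he'.symm
    have hat0 : hat 0 = 0 := by
      have h1 := hat_rep ∅ (fun _ => 0) (fun _ => zero_mem L); simpa using h1
    have hatL : ∀ y ∈ L, hat y = g y := by
      intro y hy
      obtain ⟨s0, c0, hc0, h1⟩ := hαspan 1 (one_mem Cb)
      have h2 : y = ∑ i ∈ s0, (y * c0 i) * α i := by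
        have h3 : ∑ i ∈ s0, (y * c0 i) * α i = y * ∑ i ∈ s0, c0 i * α i := by
          rw [Finset.mul_sum]; exact Finset.sum_congr rfl fun i _ => by ring
        rw [h3, ← h1, mul_one]
      conv_lhs => rw [h2]
      rw [hat_rep s0 _ (fun i => mul_mem hy (hCL _ (hc0 i)))]
      have h3 : ∀ i ∈ s0, g (y * c0 i) * α i = g y * (c0 i * α i) := by
        intro i _
        rw [hgmul y hy (c0 i) (hCL _ (hc0 i)), hgfixK _ (hc0 i).1, mul_assoc]
      rw [Finset.sum_congr rfl h3, ← Finset.mul_sum, ← h1, mul_one]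
    have hatCb : ∀ y ∈ Cb, hat y = y := by
      intro y hy
      obtain ⟨s0, c0, hc0, h1⟩ := hαspan y hy
      conv_lhs => rw [h1]
      rw [hat_rep s0 c0 (fun i => hCL _ (hc0 i)),
        Finset.sum_congr rfl (fun i _ => by rw [hgfixK _ (hc0 i).1])]
      exact h1.symm
    have hatmem : ∀ y ∈ L ⊔ Cb, hat y ∈ L ⊔ Cb := by
      intro y hy
      obtain ⟨s, c, hc, rfl⟩ := hrepex y hy
      rw [hat_rep s c hc]
      exact Subfield.sum_mem _ fun i _ =>
        mul_mem (hgmem _ (hc i)) (SetLike.le_def.mp le_sup_right (hαmem i))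
    have hatadd : ∀ x ∈ L ⊔ Cb, ∀ y ∈ L ⊔ Cb, hat (x + y) = hat x + hat y := by
      intro x hx y hy
      obtain ⟨s, c, hc, rfl⟩ := hrepex x hx
      obtain ⟨t, d, hd, rfl⟩ := hrepex y hy
      have hcm : ∀ i, (if i ∈ s then c i else 0) ∈ L := by
        intro i; split_ifs; exacts [hc i, zero_mem L]
      have hdm : ∀ i, (if i ∈ t then d i else 0) ∈ L := by
        intro i; split_ifs; exacts [hd i, zero_mem L]
      have hsum : (∑ i ∈ s, c i * α i) + (∑ i ∈ t, d i * α i)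
          = ∑ i ∈ s ∪ t, ((if i ∈ s then c i else 0) + (if i ∈ t then d i else 0)) * α i := by
        rw [Finset.sum_congr rfl (fun i (_ : i ∈ s ∪ t) =>
            show ((if i ∈ s then c i else 0) + (if i ∈ t then d i else 0)) * α i
              = (if i ∈ s then c i * α i else 0) + (if i ∈ t then d i * α i else 0) by
            split_ifs <;> ring),
          Finset.sum_add_distrib, sum_indicator Finset.subset_union_left,
          sum_indicator Finset.subset_union_right]
      rw [hsum, hat_rep _ _ (fun i => add_mem (hcm i) (hdm i)), hat_rep s c hc, hat_rep t d hd]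
      have h5 : ∀ i ∈ s ∪ t, g ((if i ∈ s then c i else 0) + (if i ∈ t then d i else 0)) * α i
          = (if i ∈ s then g (c i) * α i else 0) + (if i ∈ t then g (d i) * α i else 0) := by
        intro i _
        rw [hgadd _ (hcm i) _ (hdm i)]
        have e1 : g (if i ∈ s then c i else 0) = (if i ∈ s then g (c i) else 0) := by
          split_ifs with h
          · rfl
          · exact hg0
        have e2 : g (if i ∈ t then d i else 0) = (if i ∈ t then g (d i) else 0) := by
          split_ifs with h
          · rfl
          · exact hg0
        rw [e1, e2]
        split_ifs <;> ring
      rw [Finset.sum_congr rfl h5, Finset.sum_add_distrib,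
        sum_indicator Finset.subset_union_left, sum_indicator Finset.subset_union_right]
    have hatsmul : ∀ l ∈ L, ∀ y ∈ L ⊔ Cb, hat (l * y) = g l * hat y := by
      intro l hl y hy
      obtain ⟨t, d, hd, rfl⟩ := hrepex y hy
      have h1 : l * ∑ i ∈ t, d i * α i = ∑ i ∈ t, (l * d i) * α i := by
        rw [Finset.mul_sum]; exact Finset.sum_congr rfl fun i _ => by ring
      rw [h1, hat_rep t _ (fun i => mul_mem hl (hd i)), hat_rep t d hd, Finset.mul_sum]
      exact Finset.sum_congr rfl fun i _ => by rw [hgmul l hl (d i) (hd i)]; ring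
    have hatcb : ∀ β ∈ Cb, ∀ y ∈ L ⊔ Cb, hat (β * y) = β * hat y := by
      intro β hβ y hy
      obtain ⟨t, d, hd, rfl⟩ := hrepex y hy
      have h1 : β * ∑ i ∈ t, d i * α i = ∑ i ∈ t, d i * (β * α i) := by
        rw [Finset.mul_sum]; exact Finset.sum_congr rfl fun i _ => by ring
      have hmem : ∀ i ∈ t, d i * (β * α i) ∈ L ⊔ Cb := fun i _ =>
        mul_mem (SetLike.le_def.mp le_sup_left (hd i))
          (SetLike.le_def.mp le_sup_right (mul_mem hβ (hαmem i)))
      rw [h1, map_sum_of_add (N := L ⊔ Cb) hat hat0 hatadd t _ hmem,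
        hat_rep t d hd, Finset.mul_sum]
      refine Finset.sum_congr rfl fun i hi => ?_
      rw [hatsmul (d i) (hd i) _ (SetLike.le_def.mp le_sup_right (mul_mem hβ (hαmem i))),
        hatCb _ (mul_mem hβ (hαmem i)), hgL _ (hd i), ← hgL _ (hd i), ← hatL _ (hd i),
        hatL _ (hd i)]
      ring
    have hatmul : ∀ x ∈ L ⊔ Cb, ∀ y ∈ L ⊔ Cb, hat (x * y) = hat x * hat y := by
      intro x hx y hy
      obtain ⟨s, c, hc, rfl⟩ := hrepex x hx
      have h1 : (∑ i ∈ s, c i * α i) * y = ∑ i ∈ s, c i * (α i * y) := by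
        rw [Finset.sum_mul]; exact Finset.sum_congr rfl fun i _ => by ring
      have hmem : ∀ i ∈ s, c i * (α i * y) ∈ L ⊔ Cb := fun i _ =>
        mul_mem (SetLike.le_def.mp le_sup_left (hc i))
          (mul_mem (SetLike.le_def.mp le_sup_right (hαmem i)) hy)
      rw [h1, map_sum_of_add (N := L ⊔ Cb) hat hat0 hatadd s _ hmem,
        hat_rep s c hc, Finset.sum_mul]
      refine Finset.sum_congr rfl fun i hi => ?_
      rw [hatsmul (c i) (hc i) _ (mul_mem (SetLike.le_def.mp le_sup_right (hαmem i)) hy),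
        hatcb (α i) (hαmem i) y hy]
      ring
    have hat1 : hat 1 = 1 := hatCb 1 (one_mem Cb)
    have hatneg : ∀ x ∈ L ⊔ Cb, hat (-x) = - hat x := by
      intro x hx
      have h1 : -x = (-1 : M) * x := by ring
      rw [h1, hatsmul (-1) (neg_mem (one_mem L)) x hx, hgfixK (-1) (neg_mem (one_mem K))]
      ring
    have hatne : ∀ x ∈ L ⊔ Cb, x ≠ 0 → hat x ≠ 0 := by
      intro x hx hx0 h0
      have h1 : hat x * hat x⁻¹ = 1 := by
        rw [← hatmul x hx x⁻¹ (inv_mem hx), mul_inv_cancel₀ hx0, hat1]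
      rw [h0, zero_mul] at h1; exact zero_ne_one h1
    have hatinj : ∀ x ∈ L ⊔ Cb, ∀ y ∈ L ⊔ Cb, hat x = hat y → x = y := by
      intro x hx y hy hxy
      by_contra hne
      have h1 : x - y ≠ 0 := sub_ne_zero.mpr hne
      have h2 : hat (x - y) = 0 := by
        rw [sub_eq_add_neg, hatadd x hx _ (neg_mem hy), hatneg y hy, hxy]; ring
      exact hatne _ (sub_mem hx hy) h1 h2
    have hatdiff : ∀ x ∈ L ⊔ Cb, hat (D x) = D (hat x) := by
      intro x hx
      obtain ⟨s, c, hc, rfl⟩ := hrepex x hx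
      rw [hDrep s c hc, hat_rep s _ (fun i => hLdc _ (hc i)), hat_rep s c hc]
      have h1 : D (∑ i ∈ s, g (c i) * α i) = ∑ i ∈ s, D (g (c i)) * α i := by
        rw [dsum hD]
        exact Finset.sum_congr rfl fun i _ => by rw [hD.leibniz, hα0 i, mul_zero, zero_add]
      rw [h1]
      exact Finset.sum_congr rfl fun i _ => by rw [hgdiff _ (hc i)]
    have hatfix : ∀ x ∈ K ⊔ Cb, hat x = x := by
      let E : Subfield M :=
        { carrier := {x | x ∈ L ⊔ Cb ∧ hat x = x}
          mul_mem' := fun {a b} ha hb =>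
            ⟨mul_mem ha.1 hb.1, by rw [hatmul a ha.1 b hb.1, ha.2, hb.2]⟩
          one_mem' := ⟨one_mem _, hat1⟩
          add_mem' := fun {a b} ha hb =>
            ⟨add_mem ha.1 hb.1, by rw [hatadd a ha.1 b hb.1, ha.2, hb.2]⟩
          zero_mem' := ⟨zero_mem _, hat0⟩
          neg_mem' := fun {a} ha => ⟨neg_mem ha.1, by rw [hatneg a ha.1, ha.2]⟩
          inv_mem' := by
            intro x hx
            refine ⟨inv_mem hx.1, ?_⟩
            rcases eq_or_ne x 0 with rfl | hx0
            · rw [inv_zero, hat0]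
            · have h1 : hat x * hat x⁻¹ = 1 := by
                rw [← hatmul x hx.1 x⁻¹ (inv_mem hx.1), mul_inv_cancel₀ hx0, hat1]
              rw [hx.2] at h1
              exact (inv_eq_of_mul_eq_one_right h1).symm }
      have h2 : K ⊔ Cb ≤ E :=
        sup_le (fun x hx => ⟨SetLike.le_def.mp le_sup_left (hKL hx),
            by rw [hatL x (hKL hx), hgfixK x hx]⟩)
          (fun x hx => ⟨SetLike.le_def.mp le_sup_right hx, hatCb x hx⟩)
      exact fun x hx => (h2 hx).2
    have hitersup : ∀ x ∈ L ⊔ Cb, ∀ m : ℕ, D^[m] x ∈ L ⊔ Cb := by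
      intro x hx m
      induction m with
      | zero => simpa using hx
      | succ k ih => rw [Function.iterate_succ_apply']; exact hsupdc _ ih
    have hatiter : ∀ x ∈ L ⊔ Cb, ∀ m : ℕ, hat (D^[m] x) = D^[m] (hat x) := by
      intro x hx m
      induction m with
      | zero => simp
      | succ k ih =>
          rw [Function.iterate_succ_apply', Function.iterate_succ_apply',
            hatdiff _ (hitersup x hx k), ih]
    have hsolhat : ∀ j : Fin n, IsSolution D n a (hat (η j)) := by
      intro j
      have hmem : η j ∈ L ⊔ Cb := SetLike.le_def.mp le_sup_left (hηL j)
      unfold IsSolution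
      have h1 : ∀ m : ℕ, D^[m] (hat (η j)) = hat (D^[m] (η j)) :=
        fun m => (hatiter _ hmem m).symm
      rw [h1 n, Finset.sum_congr rfl (fun i (_ : i ∈ Finset.univ) => by rw [h1 (i:ℕ)])]
      have h2 : ∀ i : Fin n, a i * hat (D^[(i:ℕ)] (η j)) = hat (a i * D^[(i:ℕ)] (η j)) := by
        intro i
        rw [hatsmul (a i) (hKL (haK i)) _ (hitersup _ hmem _), hgfixK _ (haK i)]
      have hmem2 : ∀ i : Fin n, i ∈ Finset.univ → a i * D^[(i:ℕ)] (η j) ∈ L ⊔ Cb := fun i _ =>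
        mul_mem (SetLike.le_def.mp le_sup_left (hKL (haK i))) (hitersup _ hmem _)
      rw [Finset.sum_congr rfl fun i _ => h2 i,
        ← map_sum_of_add (N := L ⊔ Cb) hat hat0 hatadd Finset.univ _ hmem2,
        ← hatadd _ (hitersup _ hmem n) _ (Subfield.sum_mem _ hmem2)]
      have h3 := hηsol j
      unfold IsSolution at h3
      rw [h3, hat0]
    let T : Subfield M :=
      { carrier := {y | ∃ x, x ∈ L ⊔ Cb ∧ hat x = y}
        mul_mem' := by
          rintro y1 y2 ⟨x1, hx1, rfl⟩ ⟨x2, hx2, rfl⟩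
          exact ⟨x1 * x2, mul_mem hx1 hx2, hatmul x1 hx1 x2 hx2⟩
        one_mem' := ⟨1, one_mem _, hat1⟩
        add_mem' := by
          rintro y1 y2 ⟨x1, hx1, rfl⟩ ⟨x2, hx2, rfl⟩
          exact ⟨x1 + x2, add_mem hx1 hx2, hatadd x1 hx1 x2 hx2⟩
        zero_mem' := ⟨0, zero_mem _, hat0⟩
        neg_mem' := by
          rintro y ⟨x, hx, rfl⟩
          exact ⟨-x, neg_mem hx, hatneg x hx⟩
        inv_mem' := by
          rintro y ⟨x, hx, rfl⟩
          rcases eq_or_ne x 0 with rfl | hx0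
          · exact ⟨0, zero_mem _, by rw [hat0, inv_zero]⟩
          · refine ⟨x⁻¹, inv_mem hx, ?_⟩
            have h1 : hat x * hat x⁻¹ = 1 := by
              rw [← hatmul x hx x⁻¹ (inv_mem hx), mul_inv_cancel₀ hx0, hat1]
            exact (inv_eq_of_mul_eq_one_right h1).symm }
    have hTdc : DiffClosed D T := by
      rintro y ⟨x, hx, rfl⟩
      exact ⟨D x, hsupdc x hx, hatdiff x hx⟩
    have hKT : K ≤ T := fun x hx =>
      ⟨x, SetLike.le_def.mp le_sup_left (hKL hx), by rw [hatL x (hKL hx), hgfixK x hx]⟩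
    have hCbT : ∀ x ∈ Cb, x ∈ T := fun x hx =>
      ⟨x, SetLike.le_def.mp le_sup_right hx, hatCb x hx⟩
    have hηhatT : ∀ j : Fin n, hat (η j) ∈ T := fun j =>
      ⟨η j, SetLike.le_def.mp le_sup_left (hηL j), rfl⟩
    have hηT : ∀ k : Fin n, η k ∈ T := by
      intro k
      set Y : Fin (n+1) → M := Fin.snoc (fun j => hat (η j)) (η k) with hY
      have hYmem : ∀ j, Y j ∈ L ⊔ Cb := by
        intro j
        induction j using Fin.lastCases with
        | last =>
            rw [hY]
            simp only [Fin.snoc_last]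
            exact SetLike.le_def.mp le_sup_left (hηL k)
        | cast j =>
            rw [hY]
            simp only [Fin.snoc_castSucc]
            exact hatmem _ (SetLike.le_def.mp le_sup_left (hηL j))
      have hYsol : ∀ j, IsSolution D n a (Y j) := by
        intro j
        induction j using Fin.lastCases with
        | last =>
            rw [hY]
            simp only [Fin.snoc_last]
            exact hηsol k
        | cast j =>
            rw [hY]
            simp only [Fin.snoc_castSucc]
            exact hsolhat j
      obtain ⟨d, hdCb, hdsum, jx, hjx⟩ := solutions_dep hD (L ⊔ Cb) Cb hsupdc
        (fun x hx => SetLike.le_def.mp le_sup_right hx) (one_mem Cb) (zero_mem Cb)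
        hconstsup n a Y hYmem hYsol
      rw [Fin.sum_univ_castSucc] at hdsum
      simp only [hY, Fin.snoc_castSucc, Fin.snoc_last] at hdsum
      rcases eq_or_ne (d (Fin.last n)) 0 with hlast | hlast
      · exfalso
        rw [hlast, zero_mul, add_zero] at hdsum
        have h1 : ∀ j : Fin n, d (Fin.castSucc j) * hat (η j)
            = hat (d (Fin.castSucc j) * η j) := fun j =>
          (hatcb _ (hdCb _) _ (SetLike.le_def.mp le_sup_left (hηL j))).symm
        have hmem3 : ∀ j : Fin n, j ∈ Finset.univ → d (Fin.castSucc j) * η j ∈ L ⊔ Cb :=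
          fun j _ => mul_mem (SetLike.le_def.mp le_sup_right (hdCb _))
            (SetLike.le_def.mp le_sup_left (hηL j))
        rw [Finset.sum_congr rfl fun j _ => h1 j,
          ← map_sum_of_add (N := L ⊔ Cb) hat hat0 hatadd Finset.univ _ hmem3] at hdsum
        have h2 : (∑ j, d (Fin.castSucc j) * η j) = 0 :=
          hatinj _ (Subfield.sum_mem _ hmem3) 0 (zero_mem _) (by rw [hdsum, hat0])
        have hall := hηindCb _ (fun j => hdCb _) h2
        rcases Fin.eq_castSucc_or_eq_last jx with ⟨j, rfl⟩ | rfl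
        · exact hjx (hall j)
        · exact hjx hlast
      · have heq : η k = (-(d (Fin.last n))⁻¹)
            * ∑ j : Fin n, d (Fin.castSucc j) * hat (η j) := by
          have h4 : d (Fin.last n) * η k
              = - ∑ j : Fin n, d (Fin.castSucc j) * hat (η j) := by
            linear_combination hdsum
          have h5 : η k = (d (Fin.last n))⁻¹ * (d (Fin.last n) * η k) := by
            rw [← mul_assoc, inv_mul_cancel₀ hlast, one_mul]
          rw [h5, h4]
          ring
        rw [heq]
        exact mul_mem (neg_mem (inv_mem (hCbT _ (hdCb _))))
          (Subfield.sum_mem _ (fun j _ => mul_mem (hCbT _ (hdCb _)) (hηhatT j)))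
    have hLT : L ≤ T := hηgen.2.2.2 T hKT (by rintro y ⟨j, rfl⟩; exact hηT j) hTdc
    have hsupT : ∀ y ∈ L ⊔ Cb, ∃ x, x ∈ L ⊔ Cb ∧ hat x = y := fun y hy =>
      (sup_le hLT (fun x hx => hCbT x hx) : L ⊔ Cb ≤ T) hy
    refine ⟨{ toFun := fun x : ↥(L ⊔ Cb) => hat ↑x
              map_one' := hat1
              map_mul' := fun x y => hatmul ↑x x.2 ↑y y.2
              map_zero' := hat0
              map_add' := fun x y => hatadd ↑x x.2 ↑y y.2 }, ⟨⟨?_, ?_, ?_⟩, ?_⟩, ?_, ?_⟩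
    · exact fun x => hatmem ↑x x.2
    · exact fun x hx => hatfix ↑x hx
    · intro x hx hx'
      exact hatdiff x hx
    · intro y hy
      obtain ⟨x, hx, he⟩ := hsupT y hy
      exact ⟨⟨x, hx⟩, he⟩
    · intro x
      show hat ↑x = σ x
      rw [hatL ↑x x.2, hgL ↑x x.2]
    · intro s lam hlam
      show hat (∑ i ∈ s, lam i * α i) = _
      rw [hat_rep s lam hlam]
      exact Finset.sum_congr rfl fun i _ => by rw [hgL _ (hlam i)]
  · -- (c) uniqueness of the extension
    intro τ τ' hτ hτ' hLagree
    refine ringhom_ext_of_sup L Cb τ τ' ?_ ?_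
    · intro x hx
      exact hLagree ⟨x, hx⟩
    · intro x hx
      have h1 := hτ.1.2.1 ⟨x, SetLike.le_def.mp le_sup_right hx⟩
        (SetLike.le_def.mp le_sup_right hx)
      have h2 := hτ'.1.2.1 ⟨x, SetLike.le_def.mp le_sup_right hx⟩
        (SetLike.le_def.mp le_sup_right hx)
      rw [h1, h2]
end

section
/- Let K be a differential field of characteristic 0 with field of constants C, and L = K⟨η_1,...,η_n⟩ a Picard-Vessiot extension of K where η_1,...,η_n are C-linearly independent. Let C̄ be an algebraic closure of C and L̄ = L·C̄. Then for every K-differential morphism σ : L → L̄ there exist unique constants c_{ij} ∈ C̄ (1 ≤ i,j ≤ n) such that σ(η_j) = Σ_{i=1}^n c_{ij} η_i for all j, and the matrix (c_{ij}) lies in GL(n, C̄). -/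
/-!
Common setup: differential fields realized as subfields of an ambient field `M`
of characteristic zero equipped with a derivation `D`.
-/

namespace PVGalois

variable {M : Type*} [Field M]

/-! ### Auxiliary lemmas -/



namespace IsDerivation

variable {D : M → M} (hD : IsDerivation D)
include hD

theorem map_zero' : D 0 = 0 := by
  have := hD.map_add 0 0; simpa using this.symm

theorem map_one' : D 1 = 0 := by
  have := hD.leibniz 1 1
  simp only [one_mul, mul_one] at this
  exact left_eq_add.mp this

theorem map_neg' (a : M) : D (-a) = -D a := by
  have h := hD.map_add a (-a)
  rw [add_neg_cancel, hD.map_zero'] at h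
  exact eq_neg_of_add_eq_zero_right h.symm

theorem map_sub' (a b : M) : D (a - b) = D a - D b := by
  rw [sub_eq_add_neg, hD.map_add, hD.map_neg', sub_eq_add_neg]

theorem map_sum {ι : Type*} (s : Finset ι) (f : ι → M) :
    D (∑ i ∈ s, f i) = ∑ i ∈ s, D (f i) := by
  classical
  induction s using Finset.induction with
  | empty => simpa using hD.map_zero'
  | @insert _ _ h ih => rw [Finset.sum_insert h, Finset.sum_insert h, hD.map_add, ih]

theorem map_natCast (n : ℕ) : D (n : M) = 0 := by
  induction n with
  | zero => simpa using hD.map_zero'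
  | succ k ih => push_cast; rw [hD.map_add, ih, hD.map_one', add_zero]

theorem const_mul {c : M} (hc : D c = 0) (x : M) : D (c * x) = c * D x := by
  rw [hD.leibniz, hc, zero_mul, add_zero]

theorem const_mul_const {c d : M} (hc : D c = 0) (hd : D d = 0) : D (c * d) = 0 := by
  rw [hD.const_mul hc, hd, mul_zero]

theorem const_add_const {c d : M} (hc : D c = 0) (hd : D d = 0) : D (c + d) = 0 := by
  rw [hD.map_add, hc, hd, add_zero]

theorem const_sub_const {c d : M} (hc : D c = 0) (hd : D d = 0) : D (c - d) = 0 := by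
  rw [hD.map_sub', hc, hd, sub_zero]

theorem const_inv {c : M} (hc : D c = 0) : D c⁻¹ = 0 := by
  rcases eq_or_ne c 0 with rfl | h
  · simpa using hD.map_zero'
  · have h1 : D (c * c⁻¹) = 0 := by rw [mul_inv_cancel₀ h, hD.map_one']
    rw [hD.leibniz, hc, zero_mul, add_zero] at h1
    rcases mul_eq_zero.mp h1 with h2 | h2
    · exact absurd h2 h
    · exact h2

theorem const_div_const {c d : M} (hc : D c = 0) (hd : D d = 0) : D (c / d) = 0 := by
  rw [div_eq_mul_inv]; exact hD.const_mul_const hc (hD.const_inv hd)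

theorem const_neg {c : M} (hc : D c = 0) : D (-c) = 0 := by
  rw [hD.map_neg', hc, neg_zero]

theorem map_pow (x : M) (k : ℕ) : D (x ^ k) = (k : M) * x ^ (k - 1) * D x := by
  induction k with
  | zero => simp [hD.map_one']
  | succ m ih =>
    rw [pow_succ, hD.leibniz, ih]
    rcases Nat.eq_zero_or_pos m with rfl | hm
    · simp
    · have h1 : m - 1 + 1 = m := Nat.succ_pred_eq_of_pos hm
      have : x ^ (m - 1) * x = x ^ m := by rw [← pow_succ, h1]
      push_cast
      calc x ^ m * D x + ↑m * x ^ (m - 1) * D x * x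
          = x ^ m * D x + (↑m : M) * (x ^ (m - 1) * x) * D x := by ring
        _ = ((m : M) + 1) * x ^ m * D x := by rw [this]; ring

theorem iter_zero (k : ℕ) : D^[k] 0 = 0 := by
  induction k with
  | zero => rfl
  | succ m ih => rw [Function.iterate_succ_apply', ih, hD.map_zero']

theorem iter_const_mul {c : M} (hc : D c = 0) (x : M) (k : ℕ) :
    D^[k] (c * x) = c * D^[k] x := by
  induction k with
  | zero => rfl
  | succ m ih => rw [Function.iterate_succ_apply', Function.iterate_succ_apply', ih,
      hD.const_mul hc]

theorem iter_sum {ι : Type*} (s : Finset ι) (f : ι → M) (k : ℕ) :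
    D^[k] (∑ i ∈ s, f i) = ∑ i ∈ s, D^[k] (f i) := by
  induction k with
  | zero => rfl
  | succ m ih =>
    simp only [Function.iterate_succ_apply']
    rw [ih, hD.map_sum]

end IsDerivation

theorem DiffClosed.iter_mem {D : M → M} {F : Subfield M} (hF : DiffClosed D F)
    {x : M} (hx : x ∈ F) (k : ℕ) : D^[k] x ∈ F := by
  induction k with
  | zero => exact hx
  | succ m ih => rw [Function.iterate_succ_apply']; exact hF _ ih


open Matrix


/-- The Wronskian matrix of a family `u`. -/
def Wr (D : M → M) (m : ℕ) (u : Fin m → M) : Matrix (Fin m) (Fin m) M :=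
  Matrix.of fun k i => D^[(k : ℕ)] (u i)

theorem Wr_apply (D : M → M) (m : ℕ) (u : Fin m → M) (k i : Fin m) :
    Wr D m u k i = D^[(k : ℕ)] (u i) := rfl

/-- Easy direction: a nontrivial linear relation with constant coefficients kills
the Wronskian. -/
theorem wr_det_eq_zero {D : M → M} (hD : IsDerivation D) {m : ℕ} (u : Fin m → M)
    (c : Fin m → M) (hc : ∀ i, D (c i) = 0) (hrel : ∑ i, c i * u i = 0)
    (hne : c ≠ 0) : (Wr D m u).det = 0 := by
  rw [← Matrix.exists_mulVec_eq_zero_iff]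
  refine ⟨c, hne, ?_⟩
  funext k
  have h1 : ∀ i : Fin m, Wr D m u k i * c i = c i * D^[(k : ℕ)] (u i) := fun i => by
    rw [Wr_apply, mul_comm]
  calc (Wr D m u *ᵥ c) k = ∑ i, Wr D m u k i * c i := rfl
    _ = ∑ i, c i * D^[(k : ℕ)] (u i) := Finset.sum_congr rfl fun i _ => h1 i
    _ = D^[(k : ℕ)] (∑ i, c i * u i) := by
        rw [hD.iter_sum]
        exact Finset.sum_congr rfl fun i _ => (hD.iter_const_mul (hc i) (u i) _).symm
    _ = 0 := by rw [hrel, hD.iter_zero]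

/-- If `A *ᵥ w = 0` and `A.det ≠ 0` then `w = 0`. -/
theorem mulVec_zero_of_det_ne_zero {m : ℕ} {A : Matrix (Fin m) (Fin m) M}
    (hA : A.det ≠ 0) {w : Fin m → M} (hw : A *ᵥ w = 0) : w = 0 := by
  by_contra h
  exact hA (Matrix.exists_mulVec_eq_zero_iff.mp ⟨w, h, hw⟩)

/-- Hard direction: vanishing Wronskian of elements of a differential subfield `F`
produces a nontrivial relation with constant coefficients lying in `F`. -/
theorem exists_const_rel_of_wr_det_eq_zero {D : M → M} (hD : IsDerivation D) :
    ∀ (m : ℕ) (F : Subfield M), DiffClosed D F → ∀ (u : Fin m → M), (∀ i, u i ∈ F) →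
      (Wr D m u).det = 0 →
      ∃ c : Fin m → M, (∀ i, c i ∈ F ∧ D (c i) = 0) ∧ (∃ i, c i ≠ 0) ∧
        ∑ i, c i * u i = 0 := by
  intro m
  induction m with
  | zero =>
    intro F _ u _ hdet
    rw [Matrix.det_fin_zero] at hdet
    exact absurd hdet one_ne_zero
  | succ m IH =>
    intro F hF u hu hdet
    set v : Fin m → M := u ∘ Fin.castSucc with hv_def
    by_cases hv : (Wr D m v).det = 0
    · obtain ⟨c₀, hc₀, ⟨i₀, hi₀⟩, hrel₀⟩ := IH F hF v (fun i => hu _) hv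
      refine ⟨Fin.snoc c₀ 0, ?_, ⟨i₀.castSucc, by simpa using hi₀⟩, ?_⟩
      · intro i
        refine Fin.lastCases ?_ ?_ i
        · simp only [Fin.snoc_last]
          exact ⟨zero_mem F, hD.map_zero'⟩
        · intro j; simpa using hc₀ j
      · rw [Fin.sum_univ_castSucc]
        simp only [Fin.snoc_castSucc, Fin.snoc_last, zero_mul, add_zero]
        exact hrel₀
    · -- the m×m Wronskian of the first m functions is invertible
      obtain ⟨e, he0, hee⟩ := Matrix.exists_mulVec_eq_zero_iff.mpr hdet
      have hrow : ∀ k : Fin (m+1),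
          ∑ i : Fin m, D^[(k : ℕ)] (v i) * e i.castSucc
            + D^[(k : ℕ)] (u (Fin.last m)) * e (Fin.last m) = 0 := by
        intro k
        have := congrFun hee k
        simpa [Matrix.mulVec, dotProduct, Wr_apply, Fin.sum_univ_castSucc, hv_def] using this
      have helast : e (Fin.last m) ≠ 0 := by
        intro h0
        apply hv
        rw [← Matrix.exists_mulVec_eq_zero_iff]
        refine ⟨fun i => e i.castSucc, ?_, ?_⟩
        · intro hz
          apply he0
          funext j
          refine Fin.lastCases h0 (fun i => ?_) j
          exact congrFun hz i
        · funext k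
          have := hrow k.castSucc
          rw [h0, mul_zero, add_zero] at this
          simpa [Matrix.mulVec, dotProduct, Wr_apply] using this
      set f : Fin m → M := fun i => -(e i.castSucc / e (Fin.last m)) with hf_def
      have hf : ∀ k : ℕ, k ≤ m →
          ∑ i : Fin m, D^[k] (v i) * f i = D^[k] (u (Fin.last m)) := by
        intro k hk
        have h1 : ∑ i : Fin m, D^[k] (v i) * e i.castSucc
            + D^[k] (u (Fin.last m)) * e (Fin.last m) = 0 := hrow ⟨k, Nat.lt_succ_of_le hk⟩
        have h2 : ∑ i : Fin m, D^[k] (v i) * f i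
            = (-(e (Fin.last m))⁻¹) * ∑ i : Fin m, D^[k] (v i) * e i.castSucc := by
          rw [Finset.mul_sum]
          refine Finset.sum_congr rfl fun i _ => ?_
          rw [hf_def]
          field_simp
        rw [h2]
        have h3 : ∑ i : Fin m, D^[k] (v i) * e i.castSucc
            = -(D^[k] (u (Fin.last m)) * e (Fin.last m)) := eq_neg_of_add_eq_zero_left h1
        rw [h3]
        field_simp
      -- membership of f in F via Cramer over ↥F
      have hmemA : ∀ (k i : Fin m), D^[(k : ℕ)] (v i) ∈ F := fun k i =>
        (hF.iter_mem (hu _) _)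
      have hmemb : ∀ k : Fin m, D^[(k : ℕ)] (u (Fin.last m)) ∈ F := fun k =>
        (hF.iter_mem (hu _) _)
      set A' : Matrix (Fin m) (Fin m) ↥F :=
        Matrix.of (fun k i => (⟨D^[(k : ℕ)] (v i), hmemA k i⟩ : ↥F)) with hA'_def
      set b' : Fin m → ↥F := fun k => ⟨D^[(k : ℕ)] (u (Fin.last m)), hmemb k⟩ with hb'_def
      have hmap : (F.subtype).mapMatrix A' = Wr D m v := by
        ext k i; rfl
      have hA'det : A'.det ≠ 0 := by
        intro h0
        apply hv
        rw [← hmap, ← RingHom.map_det, h0, map_zero]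
      set d' : Fin m → ↥F := A'⁻¹ *ᵥ b' with hd'_def
      have hd'sol : A' *ᵥ d' = b' := by
        rw [hd'_def, Matrix.mulVec_mulVec, Matrix.mul_nonsing_inv _ (isUnit_iff_ne_zero.mpr hA'det),
          Matrix.one_mulVec]
      have hd : ∀ k : Fin m, ∑ i : Fin m, D^[(k : ℕ)] (v i) * (d' i : M)
          = D^[(k : ℕ)] (u (Fin.last m)) := by
        intro k
        have := congrArg (Subtype.val) (congrFun hd'sol k)
        simpa [Matrix.mulVec, dotProduct, hA'_def, hb'_def] using this
      -- f = d'
      have hAdet : (Wr D m v).det ≠ 0 := hv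
      have hfd : ∀ i, f i = (d' i : M) := by
        have hz : Wr D m v *ᵥ (fun i => f i - (d' i : M)) = 0 := by
          funext k
          have h1 := hf (k : ℕ) (le_of_lt k.isLt)
          have h2 := hd k
          simp only [Matrix.mulVec, dotProduct, Wr_apply]
          have : ∑ i : Fin m, D^[(k : ℕ)] (v i) * (f i - (d' i : M))
              = ∑ i : Fin m, D^[(k : ℕ)] (v i) * f i
                - ∑ i : Fin m, D^[(k : ℕ)] (v i) * (d' i : M) := by
            rw [← Finset.sum_sub_distrib]
            exact Finset.sum_congr rfl fun i _ => by ring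
          simpa [this, h1, h2] using sub_self _
        have := mulVec_zero_of_det_ne_zero hAdet hz
        intro i
        have := congrFun this i
        simpa [sub_eq_zero] using this
      have hfF : ∀ i, f i ∈ F := fun i => (hfd i) ▸ (d' i).2
      -- f has constant entries
      have hDf : ∀ i, D (f i) = 0 := by
        have hz : Wr D m v *ᵥ (fun i => D (f i)) = 0 := by
          funext k
          have h1 := hf (k : ℕ) (le_of_lt k.isLt)
          have h2 := hf ((k : ℕ) + 1) (Nat.succ_le_of_lt k.isLt)
          have h3 := congrArg D h1
          rw [hD.map_sum] at h3
          have h4 : ∀ i : Fin m, D (D^[(k : ℕ)] (v i) * f i)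
              = D^[(k : ℕ)] (v i) * D (f i) + D^[(k : ℕ)+1] (v i) * f i := by
            intro i
            rw [hD.leibniz, Function.iterate_succ_apply']
          rw [Finset.sum_congr rfl fun i _ => h4 i, Finset.sum_add_distrib] at h3
          rw [h2] at h3
          have h5 : D (D^[(k : ℕ)] (u (Fin.last m)))
              = D^[(k : ℕ)+1] (u (Fin.last m)) := (Function.iterate_succ_apply' D _ _).symm
          rw [h5] at h3
          have h6 : (∑ i : Fin m, D^[(k : ℕ)] (v i) * D (f i))
              + D^[(k : ℕ)+1] (u (Fin.last m)) = 0 + D^[(k : ℕ)+1] (u (Fin.last m)) := by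
            rw [zero_add]; exact h3
          have h7 := add_right_cancel h6
          show ∑ i : Fin m, D^[(k : ℕ)] (v i) * D (f i) = 0
          exact h7
        have := mulVec_zero_of_det_ne_zero hAdet hz
        intro i
        exact congrFun this i
      refine ⟨Fin.snoc f (-1), ?_, ⟨Fin.last m, by simp⟩, ?_⟩
      · intro i
        refine Fin.lastCases ?_ (fun j => ?_) i
        · simp only [Fin.snoc_last]
          exact ⟨neg_mem (one_mem F), by rw [hD.map_neg', hD.map_one', neg_zero]⟩
        · simp only [Fin.snoc_castSucc]
          exact ⟨hfF j, hDf j⟩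
      · rw [Fin.sum_univ_castSucc]
        simp only [Fin.snoc_castSucc, Fin.snoc_last]
        have h0 := hf 0 (Nat.zero_le m)
        simp only [Function.iterate_zero_apply] at h0
        rw [show ∑ x : Fin m, f x * u x.castSucc = ∑ x : Fin m, v x * f x from
          Finset.sum_congr rfl fun i _ => mul_comm _ _, h0]
        ring



open Polynomial in
theorem const_of_algebraic {D : M → M} (hD : IsDerivation D) [CharZero M] :
    ∀ (N : ℕ) (p : Polynomial M), p.natDegree ≤ N → p ≠ 0 →
      (∀ k, D (p.coeff k) = 0) → ∀ x : M, p.eval x = 0 → D x = 0 := by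
  intro N
  induction N with
  | zero =>
    intro p hdeg hp0 _ x hev
    have hc : p = C (p.coeff 0) := eq_C_of_natDegree_le_zero hdeg
    rw [hc, eval_C] at hev
    rw [hc, hev, map_zero] at hp0
    exact absurd rfl hp0
  | succ N IHN =>
    intro p hdeg hp0 hcoef x hev
    rcases Nat.eq_zero_or_pos p.natDegree with hn0 | hn
    · have hc : p = C (p.coeff 0) := eq_C_of_natDegree_le_zero (le_of_eq hn0)
      rw [hc, eval_C] at hev
      rw [hc, hev, map_zero] at hp0
      exact absurd rfl hp0
    · set n := p.natDegree with hn_def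
      have hder : D (p.eval x) = 0 := by rw [hev, hD.map_zero']
      rw [eval_eq_sum_range, hD.map_sum] at hder
      have h1 : ∀ k, D (p.coeff k * x ^ k)
          = p.coeff k * ((k : M) * x ^ (k - 1) * D x) := fun k => by
        rw [hD.const_mul (hcoef k), hD.map_pow]
      rw [Finset.sum_congr rfl fun k _ => h1 k] at hder
      have h2 : (∑ k ∈ Finset.range (n + 1), p.coeff k * ((k : M) * x ^ (k - 1))) * D x
          = 0 := by
        rw [Finset.sum_mul, ← hder]
        exact Finset.sum_congr rfl fun k _ => by ring
      rcases mul_eq_zero.mp h2 with hT | hDx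
      · set q : Polynomial M :=
          ∑ k ∈ Finset.range n, C (((k + 1 : ℕ) : M) * p.coeff (k + 1)) * X ^ k with hq_def
        have hqcoeff : ∀ j, q.coeff j =
            if j < n then ((j + 1 : ℕ) : M) * p.coeff (j + 1) else 0 := by
          intro j
          rw [hq_def, finset_sum_coeff]
          simp only [coeff_C_mul, coeff_X_pow]
          by_cases hj : j < n
          · rw [Finset.sum_eq_single j]
            · simp [hj]
            · intro b _ hbj
              simp [Ne.symm hbj]
            · intro hjmem
              exact absurd (Finset.mem_range.mpr hj) hjmem
          · rw [if_neg hj]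
            refine Finset.sum_eq_zero fun b hb => ?_
            have : j ≠ b := by
              intro h; exact hj (h ▸ Finset.mem_range.mp hb)
            simp [this]
        have hq0 : q ≠ 0 := by
          intro h0
          have hc1 := hqcoeff (n - 1)
          rw [h0, coeff_zero] at hc1
          have hlt : n - 1 < n := Nat.sub_lt hn Nat.one_pos
          rw [if_pos hlt] at hc1
          rw [show n - 1 + 1 = n from Nat.succ_pred_eq_of_pos hn] at hc1
          have hcn : p.coeff n ≠ 0 := by
            rw [hn_def]
            exact fun h => hp0 (leadingCoeff_eq_zero.mp h)
          have hnM : ((n : ℕ) : M) ≠ 0 := Nat.cast_ne_zero.mpr (Nat.pos_iff_ne_zero.mp hn)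
          exact (mul_ne_zero hnM hcn) hc1.symm
        have hqdeg : q.natDegree ≤ N := by
          refine natDegree_le_iff_coeff_eq_zero.mpr fun j hj => ?_
          rw [hqcoeff, if_neg]
          intro hjn
          have : n ≤ N + 1 := hdeg
          omega
        have hqc : ∀ k, D (q.coeff k) = 0 := by
          intro k
          rw [hqcoeff]
          split_ifs with h
          · exact hD.const_mul_const (hD.map_natCast _) (hcoef _)
          · exact hD.map_zero'
        have hqeval : q.eval x = 0 := by
          rw [hq_def, eval_finset_sum]
          simp only [eval_mul, eval_C, eval_pow, eval_X]
          rw [Finset.sum_range_succ'] at hT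
          simp only [Nat.cast_zero, zero_mul, mul_zero, add_zero] at hT
          rw [← hT]
          refine Finset.sum_congr rfl fun k _ => ?_
          rw [Nat.add_sub_cancel]
          push_cast
          ring
        exact IHN q hqdeg hq0 hqc x hqeval
      · exact hDx



/-- `x` is a finite `L`-linear combination of elements of `Cb`. -/
def InSpan (L Cb : Subfield M) (x : M) : Prop :=
  ∃ (T : Finset M) (l : M → M), (∀ b ∈ T, b ∈ Cb) ∧ (∀ b, l b ∈ L) ∧
    x = ∑ b ∈ T, l b * b

namespace InSpan

variable {L Cb : Subfield M}

theorem of_mem_L {x : M} (hx : x ∈ L) : InSpan L Cb x :=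
  ⟨{1}, fun _ => x, fun b hb => by simp_all [one_mem], fun _ => hx, by simp⟩

theorem of_mem_Cb {b : M} (hb : b ∈ Cb) : InSpan L Cb b :=
  ⟨{b}, fun _ => 1, fun c hc => by simp_all, fun _ => one_mem L, by simp⟩

theorem zero : InSpan L Cb (0 : M) := of_mem_L (zero_mem L)

theorem normalize {x : M} (h : InSpan L Cb x) :
    ∃ (T : Finset M) (l : M → M), (∀ b ∈ T, b ∈ Cb) ∧ (∀ b, l b ∈ L) ∧
      (∀ b ∉ T, l b = 0) ∧ x = ∑ b ∈ T, l b * b := by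
  classical
  obtain ⟨T, l, hT, hl, hx⟩ := h
  refine ⟨T, fun b => if b ∈ T then l b else 0, hT, ?_, ?_, ?_⟩
  · intro b; dsimp only; split_ifs; exacts [hl b, zero_mem L]
  · intro b hb; simp [hb]
  · rw [hx]; exact Finset.sum_congr rfl fun b hb => by simp [hb]

theorem add {x y : M} (hx : InSpan L Cb x) (hy : InSpan L Cb y) :
    InSpan L Cb (x + y) := by
  classical
  obtain ⟨T₁, l₁, hT₁, hl₁, hz₁, hx₁⟩ := hx.normalize
  obtain ⟨T₂, l₂, hT₂, hl₂, hz₂, hx₂⟩ := hy.normalize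
  refine ⟨T₁ ∪ T₂, fun b => l₁ b + l₂ b, ?_, fun b => add_mem (hl₁ b) (hl₂ b), ?_⟩
  · intro b hb
    rcases Finset.mem_union.mp hb with h | h
    exacts [hT₁ b h, hT₂ b h]
  · have e1 : ∑ b ∈ T₁ ∪ T₂, l₁ b * b = ∑ b ∈ T₁, l₁ b * b :=
      (Finset.sum_subset Finset.subset_union_left
        (fun b _ hb => by rw [hz₁ b hb, zero_mul])).symm
    have e2 : ∑ b ∈ T₁ ∪ T₂, l₂ b * b = ∑ b ∈ T₂, l₂ b * b :=
      (Finset.sum_subset Finset.subset_union_right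
        (fun b _ hb => by rw [hz₂ b hb, zero_mul])).symm
    rw [hx₁, hx₂, ← e1, ← e2, ← Finset.sum_add_distrib]
    exact Finset.sum_congr rfl fun b _ => by ring

theorem L_mul {c x : M} (hc : c ∈ L) (hx : InSpan L Cb x) : InSpan L Cb (c * x) := by
  obtain ⟨T, l, hT, hl, hx⟩ := hx
  refine ⟨T, fun b => c * l b, hT, fun b => mul_mem hc (hl b), ?_⟩
  rw [hx, Finset.mul_sum]
  exact Finset.sum_congr rfl fun b _ => by ring

theorem Cb_mul {c x : M} (hc : c ∈ Cb) (hx : InSpan L Cb x) : InSpan L Cb (c * x) := by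
  classical
  rcases eq_or_ne c 0 with rfl | hc0
  · simpa using zero
  obtain ⟨T, l, hT, hl, hx⟩ := hx
  refine ⟨T.image (fun b => c * b), fun v => l (c⁻¹ * v), ?_, fun v => hl _, ?_⟩
  · intro v hv
    obtain ⟨b, hb, rfl⟩ := Finset.mem_image.mp hv
    exact mul_mem hc (hT b hb)
  · rw [Finset.sum_image (fun a _ b _ h => mul_left_cancel₀ hc0 h)]
    rw [hx, Finset.mul_sum]
    refine Finset.sum_congr rfl fun b _ => ?_
    dsimp only
    rw [inv_mul_cancel_left₀ hc0]
    ring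

theorem sum {ι : Type*} (s : Finset ι) (f : ι → M)
    (h : ∀ i ∈ s, InSpan L Cb (f i)) : InSpan L Cb (∑ i ∈ s, f i) := by
  classical
  induction s using Finset.induction with
  | empty => simpa using zero
  | @insert a s' hns ih =>
    rw [Finset.sum_insert hns]
    exact (h a (Finset.mem_insert_self a s')).add
      (ih fun i hi => h i (Finset.mem_insert_of_mem hi))

theorem mul {x y : M} (hx : InSpan L Cb x) (hy : InSpan L Cb y) :
    InSpan L Cb (x * y) := by
  obtain ⟨T, l, hT, hl, rfl⟩ := hx
  rw [Finset.sum_mul]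
  refine sum _ _ fun b hb => ?_
  rw [mul_assoc]
  exact L_mul (hl b) (Cb_mul (hT b hb) hy)

theorem one : InSpan L Cb (1 : M) := of_mem_L (one_mem L)

theorem pow {x : M} (hx : InSpan L Cb x) (k : ℕ) : InSpan L Cb (x ^ k) := by
  induction k with
  | zero => simpa using one
  | succ m ih => rw [pow_succ]; exact ih.mul hx

theorem neg {x : M} (hx : InSpan L Cb x) : InSpan L Cb (-x) := by
  have := L_mul (neg_mem (one_mem L)) hx
  simpa using this

end InSpan



open Polynomial in
/-- If `x` satisfies a polynomial with coefficients in `L` then `x⁻¹` is again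
an `L`-combination of elements of `Cb`, provided `x` is. -/
theorem InSpan.inv_aux {L Cb : Subfield M} :
    ∀ (N : ℕ) (p : Polynomial M), p.natDegree ≤ N → p ≠ 0 → (∀ k, p.coeff k ∈ L) →
      ∀ x : M, InSpan L Cb x → x ≠ 0 → p.eval x = 0 → InSpan L Cb x⁻¹ := by
  intro N
  induction N with
  | zero =>
    intro p hdeg hp0 hc x _ hx0 hev
    have h1 : p = C (p.coeff 0) := eq_C_of_natDegree_le_zero hdeg
    rw [h1, eval_C] at hev
    rw [h1, hev, map_zero] at hp0
    exact absurd rfl hp0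
  | succ N IHN =>
    intro p hdeg hp0 hc x hx hx0 hev
    by_cases h0 : p.coeff 0 = 0
    · -- divide by X and recurse
      have hdvx : p = X * p.divX := by
        have := X_mul_divX_add p
        rw [h0, map_zero, add_zero] at this
        exact this.symm
      have hdx0 : p.divX ≠ 0 := by
        intro h
        rw [h, mul_zero] at hdvx
        exact hp0 hdvx
      have hdev : p.divX.eval x = 0 := by
        rw [hdvx] at hev
        simp only [eval_mul, eval_X] at hev
        rcases mul_eq_zero.mp hev with h | h
        · exact absurd h hx0
        · exact h
      refine IHN p.divX ?_ hdx0 (fun k => by rw [coeff_divX]; exact hc _) x hx hx0 hdev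
      have : p.divX.natDegree = p.natDegree - 1 := natDegree_divX_eq_natDegree_tsub_one
      omega
    · -- explicit inverse formula
      set n := p.natDegree with hn_def
      have hsum : p.eval x = x * ∑ k ∈ Finset.range n, p.coeff (k + 1) * x ^ k
          + p.coeff 0 := by
        rw [eval_eq_sum_range, Finset.sum_range_succ']
        rw [Finset.mul_sum]
        simp only [pow_zero, mul_one]
        congr 1
        exact Finset.sum_congr rfl fun k _ => by ring
      have hx' : x * (-(p.coeff 0)⁻¹ * ∑ k ∈ Finset.range n, p.coeff (k + 1) * x ^ k)
          = 1 := by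
        rw [hev] at hsum
        have h1 : x * ∑ k ∈ Finset.range n, p.coeff (k + 1) * x ^ k = -(p.coeff 0) :=
          eq_neg_of_add_eq_zero_left hsum.symm
        calc x * (-(p.coeff 0)⁻¹ * ∑ k ∈ Finset.range n, p.coeff (k + 1) * x ^ k)
            = -(p.coeff 0)⁻¹ * (x * ∑ k ∈ Finset.range n, p.coeff (k + 1) * x ^ k) := by
              ring
          _ = -(p.coeff 0)⁻¹ * -(p.coeff 0) := by rw [h1]
          _ = 1 := by field_simp
      have hinv := inv_eq_of_mul_eq_one_right hx'
      rw [hinv]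
      refine InSpan.L_mul (neg_mem (inv_mem (hc 0))) ?_
      exact InSpan.sum _ _ fun k _ => InSpan.L_mul (hc (k+1)) (hx.pow k)



variable {D : M → M} {K L Cb : Subfield M}

theorem inSpan_of_mem_adjoin {x : M}
    (hx : x ∈ Algebra.adjoin ↥L ((Cb : Set M))) : InSpan L Cb x := by
  refine Algebra.adjoin_induction (fun b hb => InSpan.of_mem_Cb hb)
    (fun r => InSpan.of_mem_L r.2) (fun a b _ _ ha hb => ha.add hb)
    (fun a b _ _ ha hb => ha.mul hb) hx

theorem mem_adjoin_of_inSpan {x : M} (hx : InSpan L Cb x) :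
    x ∈ Algebra.adjoin ↥L ((Cb : Set M)) := by
  obtain ⟨T, l, hT, hl, rfl⟩ := hx
  refine Subalgebra.sum_mem _ fun b hb => ?_
  have h1 : l b ∈ Algebra.adjoin ↥L ((Cb : Set M)) :=
    (Algebra.adjoin ↥L ((Cb : Set M))).algebraMap_mem ⟨l b, hl b⟩
  exact mul_mem h1 (Algebra.subset_adjoin (hT b hb))

theorem isIntegral_of_mem_Cb (hCb : IsAlgClosureOf (constantsOf D K) Cb)
    (hKL : K ≤ L) {b : M} (hb : b ∈ Cb) : IsIntegral ↥L b := by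
  obtain ⟨p, hp0, hpc, hpe⟩ := hCb.2.1 b hb
  have hcL : ∀ k, p.coeff k ∈ L := fun k => hKL ((hpc k).1)
  have hlift : p ∈ Polynomial.lifts (algebraMap ↥L M) :=
    (Polynomial.lifts_iff_coeff_lifts p).mpr fun k => ⟨⟨p.coeff k, hcL k⟩, rfl⟩
  obtain ⟨q, hq⟩ := (Polynomial.mem_lifts p).mp hlift
  have hq0 : q ≠ 0 := by
    intro h
    rw [h, Polynomial.map_zero] at hq
    exact hp0 hq.symm
  have hqe : Polynomial.aeval b q = 0 := by
    rw [Polynomial.aeval_def, ← Polynomial.eval_map, hq, hpe]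
  exact (show IsAlgebraic ↥L b from ⟨q, hq0, hqe⟩).isIntegral

theorem isIntegral_of_inSpan (hCb : IsAlgClosureOf (constantsOf D K) Cb)
    (hKL : K ≤ L) {x : M} (hx : InSpan L Cb x) : IsIntegral ↥L x := by
  have h1 : (Cb : Set M) ⊆ (integralClosure ↥L M : Set M) := fun b hb =>
    isIntegral_of_mem_Cb hCb hKL hb
  exact (mem_integralClosure_iff ↥L M).mp (Algebra.adjoin_le h1 (mem_adjoin_of_inSpan hx))

theorem InSpan.inv (hCb : IsAlgClosureOf (constantsOf D K) Cb) (hKL : K ≤ L)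
    {x : M} (hx : InSpan L Cb x) : InSpan L Cb x⁻¹ := by
  rcases eq_or_ne x 0 with rfl | hx0
  · simpa using InSpan.zero
  obtain ⟨q, hq0, hqe⟩ := (isIntegral_of_inSpan hCb hKL hx).isAlgebraic
  set p := q.map (algebraMap ↥L M) with hp_def
  have hp0 : p ≠ 0 := by
    intro h
    exact hq0 (Polynomial.map_injective _ (fun a b h => Subtype.ext h) (by simpa using h))
  have hpc : ∀ k, p.coeff k ∈ L := fun k => by
    rw [hp_def, Polynomial.coeff_map]
    exact (q.coeff k).2
  have hpe : p.eval x = 0 := by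
    rw [hp_def, Polynomial.eval_map, ← Polynomial.aeval_def, hqe]
  exact InSpan.inv_aux p.natDegree p le_rfl hp0 hpc x hx hx0 hpe

/-- The compositum `L · Cb` as a subfield. -/
noncomputable def spanSubfield (L Cb : Subfield M) {D : M → M} {K : Subfield M}
    (hCb : IsAlgClosureOf (constantsOf D K) Cb) (hKL : K ≤ L) : Subfield M where
  carrier := {x | InSpan L Cb x}
  mul_mem' := InSpan.mul
  one_mem' := InSpan.one
  add_mem' := InSpan.add
  zero_mem' := InSpan.zero
  neg_mem' := InSpan.neg
  inv_mem' := fun x hx => hx.inv hCb hKL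

theorem mem_spanSubfield {hCb : IsAlgClosureOf (constantsOf D K) Cb} {hKL : K ≤ L}
    {x : M} : x ∈ spanSubfield L Cb hCb hKL ↔ InSpan L Cb x := Iff.rfl

theorem sup_le_spanSubfield {hCb : IsAlgClosureOf (constantsOf D K) Cb} {hKL : K ≤ L} :
    L ⊔ Cb ≤ spanSubfield L Cb hCb hKL :=
  sup_le (fun x hx => InSpan.of_mem_L hx) (fun x hx => InSpan.of_mem_Cb hx)

theorem DiffClosed.spanSubfield' (hD : IsDerivation D) (hLd : DiffClosed D L)
    (hCbc : ∀ b ∈ Cb, D b = 0) {x : M} (hx : InSpan L Cb x) : InSpan L Cb (D x) := by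
  obtain ⟨T, l, hT, hl, rfl⟩ := hx
  refine ⟨T, fun b => D (l b), hT, fun b => hLd _ (hl b), ?_⟩
  rw [hD.map_sum]
  refine Finset.sum_congr rfl fun b hb => ?_
  rw [hD.leibniz, hCbc b (hT b hb), mul_zero, zero_add]

/-- Constants of the compositum `L ⊔ Cb` lie in `Cb`. -/
theorem InSpan.const_mem_Cb (hD : IsDerivation D) (hLd : DiffClosed D L)
    (hCbc : ∀ b ∈ Cb, D b = 0) (hconst : constantsOf D L = constantsOf D K)
    (hCb1 : constantsOf D K ⊆ (Cb : Set M)) :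
    ∀ (N : ℕ) (T : Finset M) (l : M → M), T.card ≤ N → (∀ b ∈ T, b ∈ Cb) →
      (∀ b, l b ∈ L) → D (∑ b ∈ T, l b * b) = 0 → (∑ b ∈ T, l b * b) ∈ Cb := by
  classical
  intro N
  induction N with
  | zero =>
    intro T l hcard _ _ _
    rw [Finset.card_eq_zero.mp (Nat.le_zero.mp hcard)]
    simpa using zero_mem Cb
  | succ N IH =>
    intro T l hcard hT hl hDs
    have hder : D (∑ b ∈ T, l b * b) = ∑ b ∈ T, D (l b) * b := by
      rw [hD.map_sum]
      refine Finset.sum_congr rfl fun b hb => ?_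
      rw [hD.leibniz, hCbc b (hT b hb), mul_zero, zero_add]
    by_cases hall : ∀ b ∈ T, D (l b) = 0
    · refine sum_mem fun b hb => mul_mem ?_ (hT b hb)
      have h1 : l b ∈ constantsOf D L := ⟨hl b, hall b hb⟩
      rw [hconst] at h1
      exact hCb1 h1
    · push_neg at hall
      obtain ⟨β, hβT, hβ0⟩ := hall
      have hrel : ∑ b ∈ T, D (l b) * b = 0 := by rw [← hder, hDs]
      have hsplit : D (l β) * β + ∑ b ∈ T.erase β, D (l b) * b
          = ∑ b ∈ T, D (l b) * b :=
        Finset.add_sum_erase T (fun b => D (l b) * b) hβT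
      have h1 : D (l β) * β = -∑ b ∈ T.erase β, D (l b) * b :=
        eq_neg_of_add_eq_zero_left (hsplit.trans hrel)
      have hβ : β = -(D (l β))⁻¹ * ∑ b ∈ T.erase β, D (l b) * b := by
        have h2 : (D (l β))⁻¹ * (D (l β) * β) = β := inv_mul_cancel_left₀ hβ0 β
        have h3 := congrArg (fun t => (D (l β))⁻¹ * t) h1
        rw [h2] at h3
        exact h3.trans (by ring)
      have hlb : l β * β = -(l β * (D (l β))⁻¹) * ∑ b ∈ T.erase β, D (l b) * b := by
        have h3 := congrArg (fun t => l β * t) hβ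
        rw [h3]
        ring
      have hxeq : ∑ b ∈ T, l b * b
          = ∑ b ∈ T.erase β, (l b - l β * (D (l β))⁻¹ * D (l b)) * b := by
        have hL : ∑ b ∈ T, l b * b = l β * β + ∑ b ∈ T.erase β, l b * b :=
          (Finset.add_sum_erase T (fun b => l b * b) hβT).symm
        rw [hL, hlb, Finset.mul_sum, ← Finset.sum_add_distrib]
        exact Finset.sum_congr rfl fun b _ => by ring
      rw [hxeq] at hDs ⊢
      refine IH (T.erase β) _ ?_ (fun b hb => hT b (Finset.mem_of_mem_erase hb))
        (fun b => sub_mem (hl b)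
          (mul_mem (mul_mem (hl β) (inv_mem (hLd _ (hl β)))) (hLd _ (hl b)))) hDs
      have := Finset.card_erase_of_mem hβT
      omega


end PVGalois

open PVGalois

/-- Let `L = K⟨η₁,…,ηₙ⟩` be a Picard-Vessiot extension of `K` with
`η₁,…,ηₙ` linearly independent over the constants `C`, `Cb` an algebraic closure of `C`,
and `L̄ = L ⊔ Cb`.  Every `K`-differential morphism `σ : L → L̄` satisfies
`σ(η_j) = ∑ᵢ c_{ij} η_i` for unique constants `c_{ij} ∈ Cb`, and the matrix `(c_{ij})`
is invertible, i.e. lies in `GL(n, Cb)`. -/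
theorem statement_4 {M : Type*} [Field M] [CharZero M] (D : M → M) (hD : IsDerivation D)
    (K L : Subfield M) (hKdc : DiffClosed D K) (hKL : K ≤ L)
    (n : ℕ) (a : Fin n → M) (η : Fin n → M) (hηL : ∀ j, η j ∈ L)
    (hPV : IsPicardVessiotWith D K L n a η)
    (Cb : Subfield M) (hCb : IsAlgClosureOf (constantsOf D K) Cb) :
    ∀ σ : ↥L →+* M, IsDiffHom D K L (L ⊔ Cb) σ →
      ∃ c : Matrix (Fin n) (Fin n) M,
        (∀ i j, c i j ∈ Cb) ∧
        (∀ j, σ ⟨η j, hηL j⟩ = ∑ i, c i j * η i) ∧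
        c.det ≠ 0 ∧
        ∀ c' : Matrix (Fin n) (Fin n) M, (∀ i j, c' i j ∈ Cb) →
          (∀ j, σ ⟨η j, hηL j⟩ = ∑ i, c' i j * η i) → c' = c := by
  classical
  intro σ hσ
  obtain ⟨ha, hsol, hindep, hgen, hconst⟩ := hPV
  obtain ⟨hKL', hηsub, hLd, hmin⟩ := hgen
  obtain ⟨hσ1, hσ2, hσ3⟩ := hσ
  -- every element of `Cb` is a constant
  have hCbc : ∀ b ∈ Cb, D b = 0 := by
    intro b hb
    obtain ⟨p, hp0, hpc, hpe⟩ := hCb.2.1 b hb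
    exact const_of_algebraic hD p.natDegree p le_rfl hp0 (fun k => (hpc k).2) b hpe
  have hCb1 : constantsOf D K ⊆ (Cb : Set M) := hCb.1
  -- σ commutes with iterated derivatives
  have hσiter : ∀ (x : M) (hx : x ∈ L) (k : ℕ),
      σ ⟨D^[k] x, hLd.iter_mem hx k⟩ = D^[k] (σ ⟨x, hx⟩) := by
    intro x hx k
    induction k with
    | zero => rfl
    | succ m ih =>
      have h1 : D^[m+1] x = D (D^[m] x) := Function.iterate_succ_apply' D m x
      have h2 := hσ3 (D^[m] x) (hLd.iter_mem hx m)
        (by rw [← h1]; exact hLd.iter_mem hx (m+1))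
      calc σ ⟨D^[m+1] x, hLd.iter_mem hx (m+1)⟩
          = σ ⟨D (D^[m] x), by rw [← h1]; exact hLd.iter_mem hx (m+1)⟩ := by
            congr 1; exact Subtype.ext h1
        _ = D (σ ⟨D^[m] x, hLd.iter_mem hx m⟩) := h2
        _ = D (D^[m] (σ ⟨x, hx⟩)) := by rw [ih]
        _ = D^[m+1] (σ ⟨x, hx⟩) := (Function.iterate_succ_apply' D m _).symm
  set y : Fin n → M := fun j => σ ⟨η j, hηL j⟩ with hy_def
  have hyS : ∀ j, InSpan L Cb (y j) := fun j =>
    (sup_le_spanSubfield (hCb := hCb) (hKL := hKL)) (hσ1 ⟨η j, hηL j⟩)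
  -- the Wronskian of η is nonzero
  have hWη : (Wr D n η).det ≠ 0 := by
    intro h0
    obtain ⟨c, hc, ⟨i0, hi0⟩, hrel⟩ :=
      exists_const_rel_of_wr_det_eq_zero hD n L hLd η hηL h0
    exact hi0 (hindep Finset.univ c (fun i => ⟨(hc i).1, (hc i).2⟩) hrel i0
      (Finset.mem_univ i0))
  -- σ(η j) is again a solution
  have hηiter : ∀ (j : Fin n) (k : ℕ), D^[k] (η j) ∈ L := fun j k =>
    hLd.iter_mem (hηL j) k
  have hysol : ∀ j, IsSolution D n a (y j) := by
    intro j
    have haL : ∀ i : Fin n, a i ∈ L := fun i => hKL (ha i)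
    have hsolL : ((⟨D^[n] (η j), hηiter j n⟩ : ↥L)
        + ∑ i : Fin n, (⟨a i, haL i⟩ : ↥L) * ⟨D^[(i : ℕ)] (η j), hηiter j i⟩) = 0 := by
      apply Subtype.ext
      push_cast
      exact hsol j
    have h2 := congrArg σ hsolL
    rw [map_add, map_sum, map_zero] at h2
    unfold IsSolution
    rw [← h2]
    congr 1
    · exact (hσiter (η j) (hηL j) n).symm
    · refine Finset.sum_congr rfl fun i _ => ?_
      rw [map_mul, hσ2 _ (ha i), hσiter (η j) (hηL j) (i : ℕ)]
  -- for each j, express σ(η j) in terms of η with coefficients in Cb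
  have key : ∀ j, ∃ γ : Fin n → M, (∀ i, γ i ∈ Cb) ∧ y j = ∑ i, γ i * η i := by
    intro j
    set u : Fin (n+1) → M := Fin.snoc η (y j) with hu_def
    have humem : ∀ i, u i ∈ spanSubfield L Cb hCb hKL := by
      intro i
      refine Fin.lastCases ?_ (fun i => ?_) i
      · rw [hu_def]; simpa [Fin.snoc_last, mem_spanSubfield] using hyS j
      · rw [hu_def]; simpa [Fin.snoc_castSucc, mem_spanSubfield] using InSpan.of_mem_L (hηL i)
    have husol : ∀ i, IsSolution D n a (u i) := by
      intro i
      refine Fin.lastCases ?_ (fun i => ?_) i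
      · rw [hu_def]; simpa [Fin.snoc_last] using hysol j
      · rw [hu_def]; simpa [Fin.snoc_castSucc] using hsol i
    have hdet : (Wr D (n+1) u).det = 0 := by
      rw [← Matrix.exists_vecMul_eq_zero_iff]
      set w : Fin (n+1) → M := Fin.snoc (fun i : Fin n => a i) (1 : M) with hw_def
      refine ⟨w, ?_, ?_⟩
      · intro h
        have := congrFun h (Fin.last n)
        simp [hw_def, Fin.snoc_last] at this
      · funext i
        have h1 := husol i
        unfold IsSolution at h1
        show ∑ k, w k * Wr D (n+1) u k i = 0
        rw [hw_def]
        rw [Fin.sum_univ_castSucc]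
        simp only [Fin.snoc_castSucc, Fin.snoc_last, one_mul]
        have hc1 : ∀ k : Fin n, Wr D (n+1) u k.castSucc i = D^[(k : ℕ)] (u i) := by
          intro k; rw [Wr_apply]; congr 1
        have hc2 : Wr D (n+1) u (Fin.last n) i = D^[n] (u i) := by
          rw [Wr_apply]; congr 1
        rw [hc2, Finset.sum_congr rfl fun k _ => by rw [hc1 k]]
        rw [add_comm] at h1
        rw [← h1]
    have hSd : DiffClosed D (spanSubfield L Cb hCb hKL) := fun x hx =>
      DiffClosed.spanSubfield' hD hLd hCbc hx
    obtain ⟨c, hcS, ⟨i0, hi00⟩, hcrel⟩ :=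
      exists_const_rel_of_wr_det_eq_zero hD (n+1) (spanSubfield L Cb hCb hKL) hSd u
        (fun i => humem i) hdet
    have hrel' : ∑ i : Fin n, c i.castSucc * η i + c (Fin.last n) * y j = 0 := by
      rw [← hcrel, Fin.sum_univ_castSucc]
      congr 1
      · refine Finset.sum_congr rfl fun i _ => ?_
        rw [hu_def]; simp [Fin.snoc_castSucc]
      · rw [hu_def]; simp [Fin.snoc_last]
    have hclast : c (Fin.last n) ≠ 0 := by
      intro h0
      apply hWη
      refine wr_det_eq_zero hD η (fun i => c i.castSucc)
        (fun i => (hcS i.castSucc).2) ?_ ?_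
      · rw [h0, zero_mul, add_zero] at hrel'
        exact hrel'
      · intro hz
        rcases Fin.eq_castSucc_or_eq_last i0 with ⟨i1, rfl⟩ | rfl
        · exact hi00 (by simpa using congrFun hz i1)
        · exact hi00 h0
    refine ⟨fun i => -(c i.castSucc / c (Fin.last n)), ?_, ?_⟩
    · intro i
      show -(c i.castSucc / c (Fin.last n)) ∈ Cb
      have hin : InSpan L Cb (-(c i.castSucc / c (Fin.last n))) := by
        have h1 : InSpan L Cb (c i.castSucc) := (hcS i.castSucc).1
        have h2 : InSpan L Cb (c (Fin.last n)) := (hcS (Fin.last n)).1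
        have := (h1.mul (h2.inv hCb hKL)).neg
        simpa [div_eq_mul_inv] using this
      have hdz : D (-(c i.castSucc / c (Fin.last n))) = 0 :=
        hD.const_neg (hD.const_div_const (hcS i.castSucc).2 (hcS (Fin.last n)).2)
      obtain ⟨T, l, hT, hl, hrepr⟩ := hin
      rw [hrepr] at hdz ⊢
      exact InSpan.const_mem_Cb hD hLd hCbc hconst hCb1 T.card T l le_rfl hT hl hdz
    · show y j = ∑ i, -(c i.castSucc / c (Fin.last n)) * η i
      have h2 : c (Fin.last n) * y j = -∑ i : Fin n, c i.castSucc * η i :=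
        eq_neg_of_add_eq_zero_right hrel'
      have h3 : (c (Fin.last n))⁻¹ * (c (Fin.last n) * y j) = y j :=
        inv_mul_cancel_left₀ hclast _
      rw [← h3, h2, mul_neg, Finset.mul_sum, ← Finset.sum_neg_distrib]
      refine Finset.sum_congr rfl fun i _ => ?_
      rw [div_eq_mul_inv]
      ring
  choose γ hγCb hγrel using key
  refine ⟨Matrix.of fun i j => γ j i, fun i j => hγCb j i, fun j => hγrel j, ?_, ?_⟩
  · -- determinant nonzero
    intro h0
    set cM' : Matrix (Fin n) (Fin n) ↥Cb := Matrix.of fun i j => ⟨γ j i, hγCb j i⟩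
      with hcM'_def
    have hmap : (Cb.subtype).mapMatrix cM' = Matrix.of fun i j => γ j i := by
      ext i j; rfl
    have h1 : cM'.det = 0 := by
      have h2 := RingHom.map_det Cb.subtype cM'
      rw [hmap, h0] at h2
      exact Subtype.coe_injective (by simpa using h2)
    obtain ⟨d', hd'0, hd'⟩ := Matrix.exists_mulVec_eq_zero_iff.mpr h1
    set d : Fin n → M := fun i => (d' i : M) with hd_def
    have hyrel : ∑ j, d j * y j = 0 := by
      have h4 : ∀ i, ∑ j, γ j i * d j = 0 := by
        intro i
        have h5 := congrFun hd' i
        have h6 := congrArg (Subtype.val) h5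
        calc ∑ j, γ j i * d j = ((Matrix.mulVec cM' d') i : M) := by
              show _ = ((∑ j, cM' i j * d' j : ↥Cb) : M)
              rw [AddSubmonoidClass.coe_finset_sum]
              exact Finset.sum_congr rfl fun j _ => rfl
          _ = 0 := h6
      calc ∑ j, d j * y j = ∑ j, ∑ i, d j * (γ j i * η i) := by
            refine Finset.sum_congr rfl fun j _ => ?_
            rw [hγrel j, Finset.mul_sum]
        _ = ∑ i, ∑ j, d j * (γ j i * η i) := Finset.sum_comm
        _ = ∑ i, (∑ j, γ j i * d j) * η i := by
            refine Finset.sum_congr rfl fun i _ => ?_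
            rw [Finset.sum_mul]
            exact Finset.sum_congr rfl fun j _ => by ring
        _ = 0 := by
            rw [Finset.sum_congr rfl fun i (_ : i ∈ Finset.univ) => by
              rw [h4 i, zero_mul]]
            exact Finset.sum_const_zero
    have hWy : (Wr D n y).det ≠ 0 := by
      set Wη' : Matrix (Fin n) (Fin n) ↥L :=
        Matrix.of fun k i => ⟨D^[(k : ℕ)] (η i), hLd.iter_mem (hηL i) _⟩ with hWη'_def
      have hm1 : (L.subtype).mapMatrix Wη' = Wr D n η := by ext k i; rfl
      have hdη : Wη'.det ≠ 0 := by
        intro h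
        apply hWη
        rw [← hm1, ← RingHom.map_det, h, map_zero]
      have hm2 : (σ : ↥L →+* M).mapMatrix Wη' = Wr D n y := by
        ext k i
        show σ ⟨D^[(k : ℕ)] (η i), _⟩ = D^[(k : ℕ)] (y i)
        exact hσiter (η i) (hηL i) k
      rw [← hm2, ← RingHom.map_det]
      intro h
      have hinj : Function.Injective σ := σ.injective
      have h9 : Wη'.det = 0 := hinj (by simpa using h)
      exact hdη h9
    apply hWy
    refine wr_det_eq_zero hD y d (fun j => hCbc _ (d' j).2) hyrel ?_
    intro h
    apply hd'0
    funext j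
    exact Subtype.ext (congrFun h j)
  · -- uniqueness
    intro c' hc'Cb hc'rel
    ext i j
    have hδ : (fun i => c' i j - γ j i) = 0 := by
      by_contra hne
      apply hWη
      refine wr_det_eq_zero hD η (fun i => c' i j - γ j i)
        (fun i => hD.const_sub_const (hCbc _ (hc'Cb i j)) (hCbc _ (hγCb j i))) ?_ hne
      rw [show ∑ i, (c' i j - γ j i) * η i
          = ∑ i, c' i j * η i - ∑ i, γ j i * η i by
            rw [← Finset.sum_sub_distrib]
            exact Finset.sum_congr rfl fun i _ => by ring]
      rw [← hc'rel j, ← hγrel j]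
      simp [hy_def]
    have h10 := congrFun hδ i
    simpa [sub_eq_zero, Matrix.of_apply] using h10
end
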